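/- arXiv:0709.1788 — 5 statements merged into one kernel-verified Lean document; each statement's English description precedes it below -/
import Mathlib

section
/- For 0 < q < 1 and all x ∈ ℂ: S_q(x) = -∑_{k=1}^∞ (-1)^{k-1} q^{k(k+1)/2}(1 - x^k)/((1-q^k)(q;q)_k). -/
open Finset

noncomputable def qPoch (q x : ℂ) (k : ℕ) : ℂ := ∏ j ∈ Finset.range k, (1 - x * q ^ j)

noncomputable def Sq (q : ℝ) (x : ℂ) : ℂ :=
  -∑' k : ℕ, ((q : ℂ) ^ (k + 1) / (1 - (q : ℂ) ^ (k + 1))) * qPoch q x (k + 1)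

namespace QAux

/-- triangle number k(k-1)/2 -/
def tl (k : ℕ) : ℕ := k * (k - 1) / 2

lemma tl_succ (k : ℕ) : tl (k+1) = tl k + k := by
  unfold tl
  rcases k with _ | m
  · rfl
  · show ((m+2) * (m+1)) / 2 = (m+1)*m/2 + (m+1)
    have h : (m+2) * (m+1) = (m+1)*m + (m+1)*2 := by ring
    rw [h, Nat.add_mul_div_right _ _ (by norm_num : (0:ℕ) < 2)]

variable (q : ℝ)

/-- real q-Pochhammer (q;q)_k -/
noncomputable def pr (k : ℕ) : ℝ := ∏ i ∈ Finset.range k, (1 - q^(i+1))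

noncomputable def Pc (k : ℕ) : ℂ := ((pr q k : ℝ) : ℂ)

/-- Gaussian binomial coefficient, as a complex number -/
noncomputable def gb (n k : ℕ) : ℂ := if k ≤ n then Pc q n / (Pc q k * Pc q (n-k)) else 0

variable {q}

lemma pow_lt_one' (hq0 : 0 < q) (hq1 : q < 1) (k : ℕ) : q^(k+1) < 1 :=
  pow_lt_one₀ hq0.le hq1 (Nat.succ_ne_zero k)

lemma pr_pos (hq0 : 0 < q) (hq1 : q < 1) (k : ℕ) : 0 < pr q k := by
  apply Finset.prod_pos
  intro i _
  have := pow_lt_one' hq0 hq1 i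
  linarith

lemma pr_le_one (hq0 : 0 < q) (hq1 : q < 1) (k : ℕ) : pr q k ≤ 1 := by
  apply Finset.prod_le_one
  · intro i _
    have := pow_lt_one' hq0 hq1 i
    linarith
  · intro i _
    have : 0 < q^(i+1) := pow_pos hq0 _
    linarith

lemma pr_succ (k : ℕ) : pr q (k+1) = pr q k * (1 - q^(k+1)) := Finset.prod_range_succ _ k

lemma Pc_succ (k : ℕ) : Pc q (k+1) = Pc q k * (1 - (q:ℂ)^(k+1)) := by
  unfold Pc; rw [pr_succ]; push_cast; ring

lemma Pc_zero : Pc q 0 = 1 := by simp [Pc, pr]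

lemma Pc_ne (hq0 : 0 < q) (hq1 : q < 1) (k : ℕ) : Pc q k ≠ 0 := by
  unfold Pc
  exact_mod_cast (pr_pos hq0 hq1 k).ne'

lemma one_sub_pow_ne (hq0 : 0 < q) (hq1 : q < 1) (k : ℕ) : (1:ℂ) - (q:ℂ)^(k+1) ≠ 0 := by
  have h : ((1 - q^(k+1) : ℝ) : ℂ) = 1 - (q:ℂ)^(k+1) := by push_cast; ring
  rw [← h]
  have h2 := pow_lt_one' hq0 hq1 k
  exact_mod_cast (by linarith : (0:ℝ) < 1 - q^(k+1)).ne'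

lemma one_sub_pow_ne' (hq0 : 0 < q) (hq1 : q < 1) {k : ℕ} (hk : 1 ≤ k) :
    (1:ℂ) - (q:ℂ)^k ≠ 0 := by
  obtain ⟨m, rfl⟩ := Nat.exists_eq_add_of_le hk
  simpa [add_comm] using one_sub_pow_ne hq0 hq1 m

lemma gb_eq {n k : ℕ} (h : k ≤ n) : gb q n k = Pc q n / (Pc q k * Pc q (n-k)) := if_pos h

lemma gb_self (hq0 : 0 < q) (hq1 : q < 1) (n : ℕ) : gb q n n = 1 := by
  rw [gb_eq le_rfl]
  simp [Pc_zero]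
  exact Pc_ne hq0 hq1 n

lemma gb_zero (hq0 : 0 < q) (hq1 : q < 1) (n : ℕ) : gb q n 0 = 1 := by
  rw [gb_eq (Nat.zero_le n)]
  simp [Pc_zero]
  exact Pc_ne hq0 hq1 n

lemma gb_of_gt {n k : ℕ} (h : n < k) : gb q n k = 0 := if_neg (by omega)



lemma gb_pascal (hq0 : 0 < q) (hq1 : q < 1) (n k : ℕ) (h : k ≤ n) :
    gb q (n+1) (k+1) = gb q n (k+1) + (q:ℂ)^(n-k) * gb q n k := by
  rcases eq_or_lt_of_le h with rfl | hlt
  · rw [gb_self hq0 hq1, gb_self hq0 hq1, gb_of_gt (Nat.lt_succ_self k)]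
    simp
  · obtain ⟨d, rfl⟩ : ∃ d, n = k + d + 1 := ⟨n - k - 1, by omega⟩
    have e1 : k + d + 1 + 1 - (k + 1) = d + 1 := by omega
    have e2 : k + d + 1 - (k + 1) = d := by omega
    have e3 : k + d + 1 - k = d + 1 := by omega
    rw [gb_eq (by omega), gb_eq (by omega), gb_eq (by omega), e1, e2, e3]
    have E1 : Pc q (k + d + 1 + 1) = Pc q (k + d + 1) * (1 - (q:ℂ)^(k+d+2)) := by
      have := Pc_succ (q := q) (k + d + 1); simpa [show k+d+1+1 = k+d+2 by ring] using this
    have E2 : Pc q (k+1) = Pc q k * (1 - (q:ℂ)^(k+1)) := Pc_succ k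
    have E3 : Pc q (d+1) = Pc q d * (1 - (q:ℂ)^(d+1)) := Pc_succ d
    rw [E1, E2, E3]
    have n1 := Pc_ne hq0 hq1 (k+d+1)
    have n2 := Pc_ne hq0 hq1 k
    have n3 := Pc_ne hq0 hq1 d
    have n4 := one_sub_pow_ne hq0 hq1 k
    have n5 := one_sub_pow_ne hq0 hq1 d
    field_simp
    ring

/-- telescoping lemma (†) -/
lemma dagger (hq0 : 0 < q) (hq1 : q < 1) (m : ℕ) (hm : 1 ≤ m) :
    ∀ N, m ≤ N → ∑ j ∈ Icc m N, (q:ℂ)^j * gb q j m / (1 - (q:ℂ)^j)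
      = (q:ℂ)^m * gb q N m / (1 - (q:ℂ)^m) := by
  intro N
  induction N with
  | zero => intro h; omega
  | succ N ih =>
    intro h
    rcases eq_or_lt_of_le h with h' | hlt
    · subst h'
      rw [Finset.Icc_self, Finset.sum_singleton]
    · have hmN : m ≤ N := by omega
      rw [Finset.sum_Icc_succ_top h, ih hmN]
      -- algebra
      obtain ⟨d, rfl⟩ : ∃ d, N = m + d := ⟨N - m, by omega⟩
      have e1 : m + d + 1 - m = d + 1 := by omega
      have e2 : m + d - m = d := by omega
      rw [gb_eq (by omega), gb_eq (by omega), e1, e2]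
      have E1 : Pc q (m + d + 1) = Pc q (m + d) * (1 - (q:ℂ)^(m+d+1)) := Pc_succ (m+d)
      have E3 : Pc q (d+1) = Pc q d * (1 - (q:ℂ)^(d+1)) := Pc_succ d
      rw [E1, E3]
      have n1 := Pc_ne hq0 hq1 (m+d)
      have n2 := Pc_ne hq0 hq1 m
      have n3 := Pc_ne hq0 hq1 d
      have n4 := one_sub_pow_ne' hq0 hq1 hm
      have n5 := one_sub_pow_ne hq0 hq1 d
      have n6 := one_sub_pow_ne' hq0 hq1 (show 1 ≤ m + d + 1 by omega)
      rw [div_add_div _ _ n4 n6, div_eq_div_iff (mul_ne_zero n4 n6) n4]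
      field_simp
      ring


/-- Gauss's q-binomial theorem for (x;q)_j -/
lemma qbt (hq0 : 0 < q) (hq1 : q < 1) (x : ℂ) :
    ∀ j, qPoch (q:ℂ) x j = ∑ k ∈ range (j+1), (-1:ℂ)^k * (q:ℂ)^(tl k) * gb q j k * x^k := by
  intro j
  induction j with
  | zero => simp [qPoch, tl, gb_zero hq0 hq1]
  | succ j ih =>
    have hpoch : qPoch (q:ℂ) x (j+1) = qPoch (q:ℂ) x j * (1 - x*(q:ℂ)^j) :=
      Finset.prod_range_succ _ _
    rw [hpoch, ih]
    rw [Finset.sum_range_succ' (fun k => (-1:ℂ)^k * (q:ℂ)^(tl k) * gb q (j+1) k * x^k) (j+1)]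
    have h0 : (-1:ℂ)^0 * (q:ℂ)^(tl 0) * gb q (j+1) 0 * x^0 = 1 := by
      simp [tl, gb_zero hq0 hq1]
    rw [h0]
    have hsplit : ∀ k ∈ range (j+1),
        (-1:ℂ)^(k+1) * (q:ℂ)^(tl (k+1)) * gb q (j+1) (k+1) * x^(k+1)
        = (-1:ℂ)^(k+1) * (q:ℂ)^(tl (k+1)) * gb q j (k+1) * x^(k+1)
          + (-((q:ℂ)^j * x)) * ((-1:ℂ)^k * (q:ℂ)^(tl k) * gb q j k * x^k) := by
      intro k hk
      have hkj : k ≤ j := by simpa using Nat.lt_succ_iff.mp (mem_range.mp hk)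
      rw [gb_pascal hq0 hq1 j k hkj]
      have hp : (q:ℂ)^(tl (k+1)) * (q:ℂ)^(j-k) = (q:ℂ)^(tl k) * (q:ℂ)^j := by
        rw [← pow_add, ← pow_add]
        congr 1
        have := tl_succ k
        omega
      calc (-1:ℂ)^(k+1) * (q:ℂ)^(tl (k+1)) * (gb q j (k+1) + (q:ℂ)^(j-k) * gb q j k) * x^(k+1)
          = (-1:ℂ)^(k+1) * (q:ℂ)^(tl (k+1)) * gb q j (k+1) * x^(k+1)
            + (-1:ℂ)^(k+1) * ((q:ℂ)^(tl (k+1)) * (q:ℂ)^(j-k)) * gb q j k * x^(k+1) := by ring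
        _ = _ := by rw [hp]; ring
    rw [Finset.sum_congr rfl hsplit, Finset.sum_add_distrib, ← Finset.mul_sum, ← ih]
    have htop : ∑ k ∈ range (j+1), (-1:ℂ)^(k+1) * (q:ℂ)^(tl (k+1)) * gb q j (k+1) * x^(k+1)
        = (∑ k ∈ range (j+1+1), (-1:ℂ)^k * (q:ℂ)^(tl k) * gb q j k * x^k) - 1 := by
      rw [Finset.sum_range_succ' (fun k => (-1:ℂ)^k * (q:ℂ)^(tl k) * gb q j k * x^k) (j+1)]
      simp [tl, gb_zero hq0 hq1]
    rw [htop, Finset.sum_range_succ, gb_of_gt (Nat.lt_succ_self j), ← ih]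
    ring

lemma poch_one {j : ℕ} (hj : 1 ≤ j) : qPoch (q:ℂ) 1 j = 0 := by
  apply Finset.prod_eq_zero (show 0 ∈ range j by simp; omega)
  simp

lemma sum_shape (j : ℕ) (f : ℕ → ℂ) :
    ∑ k ∈ range (j+1), f k = f 0 + ∑ k ∈ Icc 1 j, f k := by
  rw [range_eq_Ico, Finset.sum_eq_sum_Ico_succ_bot (by omega) f, ← Finset.Ico_add_one_right_eq_Icc]

lemma inner_id (hq0 : 0 < q) (hq1 : q < 1) (x : ℂ) {j : ℕ} (hj : 1 ≤ j) :
    ∑ k ∈ Icc 1 j, (-(-1:ℂ)^k) * (q:ℂ)^(tl k) * (1 - x^k) * gb q j k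
      = qPoch (q:ℂ) x j := by
  have hx := qbt hq0 hq1 x j
  have h1 := qbt hq0 hq1 1 j
  rw [sum_shape j] at hx h1
  rw [poch_one hj] at h1
  simp only [pow_zero, gb_zero hq0 hq1, tl, mul_one, one_mul, Nat.zero_mul, Nat.zero_div] at hx h1
  have e1 : ∑ k ∈ Icc 1 j, (-1:ℂ)^k * (q:ℂ)^(tl k) * gb q j k * x^k = qPoch (q:ℂ) x j - 1 := by
    unfold tl; linear_combination -hx
  have e2 : ∑ k ∈ Icc 1 j, (-1:ℂ)^k * (q:ℂ)^(tl k) * gb q j k * (1:ℂ)^k = -1 := by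
    unfold tl; linear_combination -h1
  calc ∑ k ∈ Icc 1 j, (-(-1:ℂ)^k) * (q:ℂ)^(tl k) * (1 - x^k) * gb q j k
      = ∑ k ∈ Icc 1 j, (-((-1:ℂ)^k * (q:ℂ)^(tl k) * gb q j k * (1:ℂ)^k)
          + (-1:ℂ)^k * (q:ℂ)^(tl k) * gb q j k * x^k) := by
        apply Finset.sum_congr rfl; intro k _; ring
    _ = -(∑ k ∈ Icc 1 j, (-1:ℂ)^k * (q:ℂ)^(tl k) * gb q j k * (1:ℂ)^k)
          + ∑ k ∈ Icc 1 j, (-1:ℂ)^k * (q:ℂ)^(tl k) * gb q j k * x^k := by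
        rw [Finset.sum_add_distrib, Finset.sum_neg_distrib]
    _ = qPoch (q:ℂ) x j := by rw [e1, e2]; ring

lemma star (hq0 : 0 < q) (hq1 : q < 1) (x : ℂ) (N : ℕ) :
    ∑ k ∈ Icc 1 N, (-(-1:ℂ)^k) * (q:ℂ)^(tl k) * (1-x^k) * ((q:ℂ)^k * gb q N k / (1-(q:ℂ)^k))
      = ∑ j ∈ Icc 1 N, (q:ℂ)^j / (1-(q:ℂ)^j) * qPoch (q:ℂ) x j := by
  calc ∑ k ∈ Icc 1 N, (-(-1:ℂ)^k) * (q:ℂ)^(tl k) * (1-x^k) * ((q:ℂ)^k * gb q N k / (1-(q:ℂ)^k))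
      = ∑ k ∈ Icc 1 N, ∑ j ∈ Icc k N,
          (-(-1:ℂ)^k) * (q:ℂ)^(tl k) * (1-x^k) * ((q:ℂ)^j * gb q j k / (1-(q:ℂ)^j)) := by
        apply Finset.sum_congr rfl
        intro k hk
        rw [Finset.mem_Icc] at hk
        rw [← Finset.mul_sum, dagger hq0 hq1 k hk.1 N hk.2]
    _ = ∑ j ∈ Icc 1 N, ∑ k ∈ Icc 1 j,
          (-(-1:ℂ)^k) * (q:ℂ)^(tl k) * (1-x^k) * ((q:ℂ)^j * gb q j k / (1-(q:ℂ)^j)) := by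
        apply Finset.sum_comm'
        intro k j
        simp only [Finset.mem_Icc]
        omega
    _ = ∑ j ∈ Icc 1 N, (q:ℂ)^j / (1-(q:ℂ)^j) * qPoch (q:ℂ) x j := by
        apply Finset.sum_congr rfl
        intro j hj
        rw [Finset.mem_Icc] at hj
        rw [← inner_id hq0 hq1 x hj.1, Finset.mul_sum]
        apply Finset.sum_congr rfl
        intro k _
        ring

lemma gensum (hq0 : 0 < q) (hq1 : q < 1) {c : ℝ} (hc : 0 ≤ c) :
    Summable (fun k : ℕ => q^(tl k) * c^k) := by
  apply summable_of_ratio_norm_eventually_le (r := 1/2) (by norm_num)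
  have ht : Filter.Tendsto (fun k : ℕ => q^k * c) Filter.atTop (nhds 0) := by
    simpa using (tendsto_pow_atTop_nhds_zero_of_lt_one hq0.le hq1).mul_const c
  filter_upwards [ht.eventually_le_const (by norm_num : (0:ℝ) < 1/2)] with k hk
  have he : q^(tl (k+1)) * c^(k+1) = (q^k * c) * (q^(tl k) * c^k) := by
    rw [tl_succ]; ring
  rw [he, norm_mul]
  apply mul_le_mul_of_nonneg_right _ (norm_nonneg _)
  rw [Real.norm_of_nonneg (by positivity)]
  exact hk

lemma poch_norm_bound (hq0 : 0 < q) (hq1 : q < 1) (x : ℂ) (k : ℕ) :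
    ‖qPoch (q:ℂ) x k‖ ≤ Real.exp (‖x‖ * (1-q)⁻¹) := by
  have hgs : ∑ j ∈ range k, ‖x‖ * q^j ≤ ‖x‖ * (1-q)⁻¹ := by
    rw [← Finset.mul_sum]
    apply mul_le_mul_of_nonneg_left _ (norm_nonneg x)
    have := Summable.sum_le_tsum (range k) (fun i _ => pow_nonneg hq0.le i)
      (summable_geometric_of_lt_one hq0.le hq1)
    rwa [tsum_geometric_of_lt_one hq0.le hq1] at this
  calc ‖qPoch (q:ℂ) x k‖ = ∏ j ∈ range k, ‖1 - x * (q:ℂ)^j‖ := norm_prod _ _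
    _ ≤ ∏ j ∈ range k, Real.exp (‖x‖ * q^j) := by
        apply Finset.prod_le_prod (fun j _ => norm_nonneg _)
        intro j _
        have h1 : ‖1 - x * (q:ℂ)^j‖ ≤ 1 + ‖x‖ * q^j := by
          calc ‖1 - x * (q:ℂ)^j‖ ≤ ‖(1:ℂ)‖ + ‖x * (q:ℂ)^j‖ := norm_sub_le _ _
            _ = 1 + ‖x‖ * q^j := by
                rw [norm_one, norm_mul, norm_pow, Complex.norm_real,
                  Real.norm_of_nonneg hq0.le]
        have h2 : 1 + ‖x‖ * q^j ≤ Real.exp (‖x‖ * q^j) := by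
          have := Real.add_one_le_exp (‖x‖ * q^j)
          linarith
        linarith
    _ = Real.exp (∑ j ∈ range k, ‖x‖ * q^j) := (Real.exp_sum _ _).symm
    _ ≤ Real.exp (‖x‖ * (1-q)⁻¹) := Real.exp_le_exp.2 hgs

lemma norm_one_sub_pow (hq0 : 0 < q) (hq1 : q < 1) {k : ℕ} (hk : 1 ≤ k) :
    1 - q ≤ ‖(1:ℂ) - (q:ℂ)^k‖ := by
  have h : (1:ℂ) - (q:ℂ)^k = ((1 - q^k : ℝ) : ℂ) := by push_cast; ring
  have hqk : q^k < 1 := pow_lt_one₀ hq0.le hq1 (by omega)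
  have hqk' : q^k ≤ q := by simpa using pow_le_pow_of_le_one hq0.le hq1.le hk
  rw [h, Complex.norm_real, Real.norm_of_nonneg (by linarith)]
  linarith

lemma pr_ge (hq0 : 0 < q) (hq1 : q < 1) (k : ℕ) : (1-q)^k ≤ pr q k := by
  calc (1-q)^k = ∏ _i ∈ range k, (1-q) := by simp
    _ ≤ pr q k := by
        apply Finset.prod_le_prod
        · intro i _; linarith
        · intro i _
          have h : q^(i+1) ≤ q^1 := pow_le_pow_of_le_one hq0.le hq1.le (by omega)
          rw [pow_one] at h
          linarith

lemma one_sub_sum_le_prod (s : Finset ℕ) (f : ℕ → ℝ) (h0 : ∀ i ∈ s, 0 ≤ f i)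
    (h1 : ∀ i ∈ s, f i ≤ 1) : 1 - ∑ i ∈ s, f i ≤ ∏ i ∈ s, (1 - f i) := by
  classical
  induction s using Finset.induction_on with
  | empty => simp
  | @insert a s hnotmem ih =>
    rw [Finset.sum_insert hnotmem, Finset.prod_insert hnotmem]
    have ha0 := h0 a (Finset.mem_insert_self a s)
    have ha1 := h1 a (Finset.mem_insert_self a s)
    have ihs := ih (fun i hi => h0 i (Finset.mem_insert_of_mem hi))
      (fun i hi => h1 i (Finset.mem_insert_of_mem hi))
    have hs0 : 0 ≤ ∑ i ∈ s, f i := Finset.sum_nonneg (fun i hi => h0 i (Finset.mem_insert_of_mem hi))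
    nlinarith [mul_le_mul_of_nonneg_left ihs (by linarith : (0:ℝ) ≤ 1 - f a)]

lemma qPoch_q (k : ℕ) : qPoch (q:ℂ) (q:ℂ) k = Pc q k := by
  unfold qPoch Pc pr
  push_cast
  apply Finset.prod_congr rfl
  intro j _
  push_cast
  ring

lemma pr_div_bound (hq0 : 0 < q) (hq1 : q < 1) {k n : ℕ} (hk : k ≤ n) :
    1 - pr q n / pr q (n-k) ≤ q^(n-k+1) * (1-q)⁻¹ := by
  set m := n - k with hm
  have hsplit : pr q n = pr q m * ∏ i ∈ Ico m n, (1 - q^(i+1)) := by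
    unfold pr
    rw [range_eq_Ico, range_eq_Ico]
    exact (Finset.prod_Ico_consecutive _ (Nat.zero_le m) (by omega)).symm
  have hprm := pr_pos hq0 hq1 m
  have hdiv : pr q n / pr q m = ∏ i ∈ Ico m n, (1 - q^(i+1)) := by
    rw [hsplit]; field_simp
  rw [hdiv]
  have hb : 1 - ∑ i ∈ Ico m n, q^(i+1) ≤ ∏ i ∈ Ico m n, (1 - q^(i+1)) := by
    apply one_sub_sum_le_prod
    · intro i _; positivity
    · intro i _
      have := pow_lt_one' hq0 hq1 i
      linarith
  have hs : ∑ i ∈ Ico m n, q^(i+1) ≤ q^(m+1) * (1-q)⁻¹ := by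
    rw [Finset.sum_Ico_eq_sum_range (fun i => q^(i+1)) m n]
    have he : ∀ j, q^(m+j+1) = q^(m+1) * q^j := by intro j; rw [← pow_add]; congr 1; omega
    calc ∑ j ∈ range (n-m), q^(m+j+1) = ∑ j ∈ range (n-m), q^(m+1) * q^j := by
          apply Finset.sum_congr rfl; intro j _; exact he j
      _ = q^(m+1) * ∑ j ∈ range (n-m), q^j := by rw [Finset.mul_sum]
      _ ≤ q^(m+1) * (1-q)⁻¹ := by
          apply mul_le_mul_of_nonneg_left _ (by positivity)
          have := Summable.sum_le_tsum (range (n-m)) (fun i _ => pow_nonneg hq0.le i)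
            (summable_geometric_of_lt_one hq0.le hq1)
          rwa [tsum_geometric_of_lt_one hq0.le hq1] at this
  linarith

lemma pr_anti (hq0 : 0 < q) (hq1 : q < 1) {m n : ℕ} (h : m ≤ n) : pr q n ≤ pr q m := by
  have hsplit : pr q n = pr q m * ∏ i ∈ Ico m n, (1 - q^(i+1)) := by
    unfold pr
    rw [range_eq_Ico, range_eq_Ico]
    exact (Finset.prod_Ico_consecutive _ (Nat.zero_le m) h).symm
  rw [hsplit]
  have h1 : ∏ i ∈ Ico m n, (1 - q^(i+1)) ≤ 1 := by
    apply Finset.prod_le_one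
    · intro i _
      have := pow_lt_one' hq0 hq1 i; linarith
    · intro i _
      have : 0 < q^(i+1) := pow_pos hq0 _
      linarith
  nlinarith [pr_pos hq0 hq1 m]

lemma gb_diff_bound (hq0 : 0 < q) (hq1 : q < 1) {k n : ℕ} (hk : k ≤ n) :
    ‖1 / Pc q k - gb q n k‖ ≤ q^(n-k+1) * (1-q)⁻¹ * ((1-q)⁻¹)^k := by
  have hcast : 1 / Pc q k - gb q n k
      = (((1 / pr q k - pr q n / (pr q k * pr q (n-k))) : ℝ) : ℂ) := by
    rw [gb_eq hk]
    unfold Pc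
    push_cast
    ring
  have hk0 := pr_pos hq0 hq1 k
  have hnk0 := pr_pos hq0 hq1 (n-k)
  have hn0 := pr_pos hq0 hq1 n
  have hr : (1 / pr q k - pr q n / (pr q k * pr q (n-k)))
      = (1 - pr q n / pr q (n-k)) / pr q k := by
    field_simp
    try ring
    try exact Or.inl (by ring)
  have hnonneg : 0 ≤ 1 - pr q n / pr q (n-k) := by
    have h1 : pr q n ≤ pr q (n-k) := pr_anti hq0 hq1 (by omega)
    have := div_le_one_of_le₀ h1 hnk0.le
    linarith
  rw [hcast, Complex.norm_real, hr, Real.norm_of_nonneg (by positivity)]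
  have hbound := pr_div_bound hq0 hq1 hk
  have hprk : (1-q)^k ≤ pr q k := pr_ge hq0 hq1 k
  have h1q : (0:ℝ) < 1 - q := by linarith
  calc (1 - pr q n / pr q (n-k)) / pr q k ≤ (q^(n-k+1) * (1-q)⁻¹) / (1-q)^k := by
        gcongr <;> first | exact hbound | exact hprk | positivity
    _ = q^(n-k+1) * (1-q)⁻¹ * ((1-q)⁻¹)^k := by
        rw [div_eq_mul_inv, ← inv_pow]

noncomputable def bt (q : ℝ) (x : ℂ) (j : ℕ) : ℂ :=
  -(-1:ℂ)^j * (q:ℂ)^(tl (j+1)) * (1-x^j) / ((1-(q:ℂ)^j) * Pc q j)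

noncomputable def st (q : ℝ) (x : ℂ) (N j : ℕ) : ℂ :=
  -(-1:ℂ)^j * (q:ℂ)^(tl j) * (1-x^j) * ((q:ℂ)^j * gb q N j / (1-(q:ℂ)^j))

noncomputable def cc (q : ℝ) (x : ℂ) (j : ℕ) : ℂ :=
  -(-1:ℂ)^j * (q:ℂ)^(tl (j+1)) * (1-x^j) / (1-(q:ℂ)^j)

lemma bt_split (x : ℂ) (N j : ℕ) :
    bt q x j = st q x N j + cc q x j * (1/Pc q j - gb q N j) := by
  unfold bt st cc
  rw [tl_succ, pow_add, mul_comm (1-(q:ℂ)^j) (Pc q j), ← div_div]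
  ring

lemma norm_one_sub_pow_x (x : ℂ) (j : ℕ) : ‖1 - x^j‖ ≤ 1 + ‖x‖^j := by
  calc ‖1 - x^j‖ ≤ ‖(1:ℂ)‖ + ‖x^j‖ := norm_sub_le _ _
    _ = 1 + ‖x‖^j := by rw [norm_one, norm_pow]

lemma cc_norm (hq0 : 0 < q) (hq1 : q < 1) (x : ℂ) {j : ℕ} (hj : 1 ≤ j) :
    ‖cc q x j‖ ≤ q^(tl (j+1)) * (1+‖x‖^j) * (1-q)⁻¹ := by
  unfold cc
  have h1q : (0:ℝ) < 1 - q := by linarith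
  have hden := norm_one_sub_pow hq0 hq1 hj
  have hnum : ‖(-(-1:ℂ)^j * (q:ℂ)^(tl (j+1)) * (1-x^j))‖ ≤ q^(tl (j+1)) * (1+‖x‖^j) := by
    rw [norm_mul, norm_mul, norm_neg, norm_pow, norm_neg, norm_one, one_pow, one_mul,
      norm_pow, Complex.norm_real, Real.norm_of_nonneg hq0.le]
    exact mul_le_mul_of_nonneg_left (norm_one_sub_pow_x x j) (by positivity)
  rw [norm_div]
  calc ‖(-(-1:ℂ)^j * (q:ℂ)^(tl (j+1)) * (1-x^j))‖ / ‖1-(q:ℂ)^j‖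
      ≤ (q^(tl (j+1)) * (1+‖x‖^j)) / (1-q) :=
        div_le_div₀ (by positivity) hnum h1q hden
    _ = q^(tl (j+1)) * (1+‖x‖^j) * (1-q)⁻¹ := by rw [div_eq_mul_inv]

lemma one_add_pow_le (X : ℝ) (hX : 0 ≤ X) (j : ℕ) : 1 + X^j ≤ 2*(1+X)^j := by
  have h1 : X^j ≤ (1+X)^j := pow_le_pow_left₀ hX (by linarith) j
  have h2 : (1:ℝ) ≤ (1+X)^j := one_le_pow₀ (by linarith)
  linarith

lemma delta_term_bound (hq0 : 0 < q) (hq1 : q < 1) (x : ℂ) {j N : ℕ}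
    (hj : 1 ≤ j) (hjN : j ≤ N) :
    ‖bt q x j - st q x N j‖
      ≤ q^(N+1) * (2*((1-q)⁻¹)^2) * (q^(tl j) * ((1+‖x‖)*(1-q)⁻¹)^j) := by
  have h1q : (0:ℝ) < 1 - q := by linarith
  set X := ‖x‖ with hX
  rw [bt_split x N j, add_sub_cancel_left, norm_mul]
  have hdiff := gb_diff_bound hq0 hq1 (hjN : j ≤ N)
  have hcn := cc_norm hq0 hq1 x hj
  have hexp1 : q^(tl (j+1)) = q^(tl j) * q^j := by rw [tl_succ, pow_add]
  have hexp2 : q^j * q^(N-j+1) = q^(N+1) := by rw [← pow_add]; congr 1; omega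
  calc ‖cc q x j‖ * ‖1/Pc q j - gb q N j‖
      ≤ (q^(tl (j+1)) * (1+X^j) * (1-q)⁻¹) * (q^(N-j+1) * (1-q)⁻¹ * ((1-q)⁻¹)^j) :=
        mul_le_mul hcn hdiff (norm_nonneg _) (by positivity)
    _ = (1+X^j) * ((q^j * q^(N-j+1)) * (q^(tl j) * ((1-q)⁻¹)^2 * ((1-q)⁻¹)^j)) := by
        rw [hexp1]; ring
    _ = (1+X^j) * (q^(N+1) * (q^(tl j) * ((1-q)⁻¹)^2 * ((1-q)⁻¹)^j)) := by rw [hexp2]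
    _ ≤ (2*(1+X)^j) * (q^(N+1) * (q^(tl j) * ((1-q)⁻¹)^2 * ((1-q)⁻¹)^j)) := by
        apply mul_le_mul_of_nonneg_right (one_add_pow_le X (norm_nonneg x) j) (by positivity)
    _ = q^(N+1) * (2*((1-q)⁻¹)^2) * (q^(tl j) * ((1+X)*(1-q)⁻¹)^j) := by
        rw [mul_pow]; ring

lemma range_to_Icc (f : ℕ → ℂ) (N : ℕ) : ∑ k ∈ range N, f (k+1) = ∑ j ∈ Icc 1 N, f j := by
  rw [← Finset.Ico_add_one_right_eq_Icc, Finset.sum_Ico_eq_sum_range f 1 (N+1), Nat.add_sub_cancel]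
  apply Finset.sum_congr rfl
  intro i _
  rw [add_comm]

end QAux

set_option maxHeartbeats 2000000 in
open QAux Filter in
theorem qlog_alternating_expansion (q : ℝ) (hq0 : 0 < q) (hq1 : q < 1) (x : ℂ) :
    Sq q x = -∑' k : ℕ, (-1 : ℂ) ^ k * (q : ℂ) ^ ((k + 1) * (k + 2) / 2) * (1 - x ^ (k + 1)) /
      ((1 - (q : ℂ) ^ (k + 1)) * qPoch q (q : ℂ) (k + 1)) := by
  have h1q : (0:ℝ) < 1 - q := by linarith
  set X : ℝ := ‖x‖ with hXdef
  have hX : 0 ≤ X := norm_nonneg x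
  set a : ℕ → ℂ := fun k => ((q : ℂ) ^ (k + 1) / (1 - (q : ℂ) ^ (k + 1))) * qPoch q x (k + 1)
    with ha_def
  set b : ℕ → ℂ := fun k => (-1 : ℂ) ^ k * (q : ℂ) ^ ((k + 1) * (k + 2) / 2) * (1 - x ^ (k + 1)) /
      ((1 - (q : ℂ) ^ (k + 1)) * qPoch q (q : ℂ) (k + 1)) with hb_def
  -- b in terms of bt
  have hbbt : ∀ k : ℕ, b k = bt q x (k+1) := by
    intro k
    rw [hb_def]
    simp only []
    rw [qPoch_q]
    unfold bt
    have he : (k+1) * (k+2) / 2 = tl (k+2) := by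
      unfold tl
      simp [Nat.mul_comm]
    rw [he, pow_succ]
    ring
  -- summability of a
  have ha : Summable a := by
    set C : ℝ := Real.exp (X * (1-q)⁻¹) with hC
    have hC0 : 0 < C := Real.exp_pos _
    apply Summable.of_norm_bounded (g := fun k => C * (1-q)⁻¹ * q^(k+1))
    · exact (summable_nat_add_iff 1).mpr
        ((summable_geometric_of_lt_one hq0.le hq1).mul_left (C * (1-q)⁻¹))
    · intro k
      rw [ha_def]
      simp only []
      rw [norm_mul, norm_div, norm_pow, Complex.norm_real, Real.norm_of_nonneg hq0.le]
      have hd := norm_one_sub_pow hq0 hq1 (show 1 ≤ k+1 by omega)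
      have hp := poch_norm_bound hq0 hq1 x (k+1)
      calc q^(k+1) / ‖1-(q:ℂ)^(k+1)‖ * ‖qPoch (q:ℂ) x (k+1)‖
          ≤ q^(k+1) / (1-q) * C := by
            apply mul_le_mul _ hp (norm_nonneg _) (by positivity)
            apply div_le_div_of_nonneg_left (by positivity) h1q hd
        _ = C * (1-q)⁻¹ * q^(k+1) := by rw [div_eq_mul_inv]; ring
  -- summability of b
  have hb : Summable b := by
    set c2 : ℝ := q * (1+X) * (1-q)⁻¹ with hc2
    have hc2' : 0 ≤ c2 := by positivity
    apply Summable.of_norm_bounded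
      (g := fun k => (2 * (1-q)⁻¹) * (q^(tl (k+1)) * c2^(k+1)))
    · exact ((summable_nat_add_iff 1).mpr (gensum hq0 hq1 hc2')).mul_left _
    · intro k
      rw [hbbt k]
      unfold bt
      rw [norm_div, norm_mul, norm_mul, norm_neg, norm_pow, norm_neg, norm_one, one_pow,
        one_mul, norm_pow, Complex.norm_real, Real.norm_of_nonneg hq0.le, norm_mul]
      have hd := norm_one_sub_pow hq0 hq1 (show 1 ≤ k+1 by omega)
      have hPc : ‖Pc q (k+1)‖ = pr q (k+1) := by
        rw [Pc, Complex.norm_real, Real.norm_of_nonneg (pr_pos hq0 hq1 (k+1)).le]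
      have hprge := pr_ge hq0 hq1 (k+1)
      have hprpos := pr_pos hq0 hq1 (k+1)
      have hnum : q^(tl (k+1+1)) * ‖1 - x^(k+1)‖ ≤ q^(tl (k+2)) * (1 + X^(k+1)) :=
        mul_le_mul_of_nonneg_left (norm_one_sub_pow_x x (k+1)) (by positivity)
      have hden : (1-q) * (1-q)^(k+1) ≤ ‖1-(q:ℂ)^(k+1)‖ * ‖Pc q (k+1)‖ := by
        rw [hPc]
        exact mul_le_mul hd hprge (by positivity) (norm_nonneg _)
      calc q^(tl (k+1+1)) * ‖1 - x^(k+1)‖ / (‖1-(q:ℂ)^(k+1)‖ * ‖Pc q (k+1)‖)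
          ≤ (q^(tl (k+2)) * (1 + X^(k+1))) / ((1-q) * (1-q)^(k+1)) :=
            div_le_div₀ (by positivity) hnum (by positivity) hden
        _ = (1 + X^(k+1)) * (q^(tl (k+1)) * q^(k+1) * ((1-q)⁻¹)^(k+2)) := by
            rw [show tl (k+2) = tl (k+1) + (k+1) from tl_succ (k+1), pow_add]
            rw [div_eq_mul_inv, mul_inv, ← inv_pow]
            rw [show ((1-q)⁻¹)^(k+2) = (1-q)⁻¹ * ((1-q)⁻¹)^(k+1) from by rw [← pow_succ']]
            ring
        _ ≤ (2 * (1+X)^(k+1)) * (q^(tl (k+1)) * q^(k+1) * ((1-q)⁻¹)^(k+2)) := by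
            apply mul_le_mul_of_nonneg_right (one_add_pow_le X hX (k+1)) (by positivity)
        _ = (2 * (1-q)⁻¹) * (q^(tl (k+1)) * c2^(k+1)) := by
            rw [hc2, mul_pow, mul_pow,
              show ((1-q)⁻¹:ℝ)^(k+2) = ((1-q)⁻¹)^(k+1) * (1-q)⁻¹ from pow_succ _ _]
            ring
  -- partial sums of a converge to L := ∑' a over Icc form
  have hA : Tendsto (fun N => ∑ j ∈ Icc 1 N, ((q:ℂ)^j / (1-(q:ℂ)^j)) * qPoch (q:ℂ) x j)
      atTop (nhds (∑' k, a k)) := by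
    have h := ha.hasSum.tendsto_sum_nat
    have heq : (fun N => ∑ k ∈ range N, a k)
        = (fun N => ∑ j ∈ Icc 1 N, ((q:ℂ)^j / (1-(q:ℂ)^j)) * qPoch (q:ℂ) x j) := by
      funext N
      exact range_to_Icc (fun j => ((q:ℂ)^j / (1-(q:ℂ)^j)) * qPoch (q:ℂ) x j) N
    rwa [heq] at h
  -- delta tends to zero
  set c3 : ℝ := (1+X) * (1-q)⁻¹ with hc3
  have hc3' : 0 ≤ c3 := by positivity
  have hu := gensum hq0 hq1 hc3'
  set M : ℝ := ∑' j : ℕ, q^(tl j) * c3^j with hM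
  set K : ℝ := 2 * ((1-q)⁻¹)^2 with hK
  have hMK : 0 ≤ K * M := by
    apply mul_nonneg (by positivity)
    exact tsum_nonneg (fun j => by positivity)
  have hdelta : Tendsto (fun N => ∑ j ∈ Icc 1 N, (bt q x j - st q x N j)) atTop (nhds 0) := by
    have hg : Tendsto (fun N : ℕ => K * M * q^(N+1)) atTop (nhds 0) := by
      have := ((tendsto_pow_atTop_nhds_zero_of_lt_one hq0.le hq1).comp
        (tendsto_add_atTop_nat 1)).const_mul (K*M)
      simpa using this
    refine squeeze_zero_norm (fun N => ?_) hg
    calc ‖∑ j ∈ Icc 1 N, (bt q x j - st q x N j)‖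
          ≤ ∑ j ∈ Icc 1 N, ‖bt q x j - st q x N j‖ := norm_sum_le _ _
        _ ≤ ∑ j ∈ Icc 1 N, q^(N+1) * K * (q^(tl j) * c3^j) := by
            apply Finset.sum_le_sum
            intro j hj
            rw [Finset.mem_Icc] at hj
            exact delta_term_bound hq0 hq1 x hj.1 hj.2
        _ = q^(N+1) * K * ∑ j ∈ Icc 1 N, (q^(tl j) * c3^j) := by rw [Finset.mul_sum]
        _ ≤ q^(N+1) * K * M := by
            apply mul_le_mul_of_nonneg_left _ (by positivity)
            exact Summable.sum_le_tsum _ (fun i _ => by positivity) hu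
        _ = K * M * q^(N+1) := by ring
  -- partial sums of b converge to ∑' a
  have hBtend : Tendsto (fun N => ∑ k ∈ range N, b k) atTop (nhds (∑' k, a k)) := by
    have heq : (fun N => ∑ k ∈ range N, b k)
        = (fun N => (∑ j ∈ Icc 1 N, ((q:ℂ)^j / (1-(q:ℂ)^j)) * qPoch (q:ℂ) x j)
            + ∑ j ∈ Icc 1 N, (bt q x j - st q x N j)) := by
      funext N
      have h1 : ∑ k ∈ range N, b k = ∑ j ∈ Icc 1 N, bt q x j := by
        rw [show ∑ k ∈ range N, b k = ∑ k ∈ range N, bt q x (k+1) from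
          Finset.sum_congr rfl (fun k _ => hbbt k)]
        exact range_to_Icc (bt q x) N
      rw [h1, ← star hq0 hq1 x N, ← Finset.sum_add_distrib]
      apply Finset.sum_congr rfl
      intro j _
      unfold st
      ring
    rw [heq]
    simpa using hA.add hdelta
  have hsum_eq : ∑' k, b k = ∑' k, a k :=
    tendsto_nhds_unique hb.hasSum.tendsto_sum_nat hBtend
  rw [Sq]
  exact congrArg Neg.neg hsum_eq.symm
end

section
/- For 0 < q < 1 and every integer ℓ ≥ 1: ∑_{n=1}^∞ ((q;q)_{n-1}/(q^{ℓ+1};q)_n)·q^{nℓ} = q^ℓ/(1-q^ℓ). -/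
open Finset Filter

theorem qGauss_summation_consequence (q : ℝ) (hq0 : 0 < q) (hq1 : q < 1)
    (l : ℕ) (hl : 1 ≤ l) :
    ∑' n : ℕ, (∏ j ∈ Finset.range n, (1 - q ^ (j + 1))) /
        (∏ j ∈ Finset.range (n + 1), (1 - q ^ (l + 1) * q ^ j)) * q ^ ((n + 1) * l)
      = q ^ l / (1 - q ^ l) := by
  have hqk : ∀ k : ℕ, 1 ≤ k → 0 < 1 - q ^ k := by
    intro k hk
    have : q ^ k < 1 := pow_lt_one₀ hq0.le hq1 (by omega)
    linarith
  set P : ℕ → ℝ := fun n => ∏ j ∈ Finset.range n, (1 - q ^ (j + 1)) with hP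
  set Q : ℕ → ℝ := fun n => ∏ j ∈ Finset.range n, (1 - q ^ (l + 1) * q ^ j) with hQ
  have hQfac : ∀ j : ℕ, 0 < 1 - q ^ (l + 1) * q ^ j := by
    intro j
    have := hqk (l + 1 + j) (by omega)
    rwa [pow_add] at this
  have hPpos : ∀ n, 0 < P n := fun n =>
    Finset.prod_pos fun j _ => hqk (j + 1) (by omega)
  have hQpos : ∀ n, 0 < Q n := fun n => Finset.prod_pos fun j _ => hQfac j
  have hql : 0 < 1 - q ^ l := hqk l hl
  set a : ℕ → ℝ := fun n => P n / Q (n + 1) * q ^ ((n + 1) * l) with ha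
  set c : ℕ → ℝ := fun n => P n / Q n * q ^ (n * l) * (q ^ l / (1 - q ^ l)) with hc
  have hPsucc : ∀ n, P (n + 1) = P n * (1 - q ^ (n + 1)) := fun n =>
    Finset.prod_range_succ _ n
  have hQsucc : ∀ n, Q (n + 1) = Q n * (1 - q ^ (l + 1) * q ^ n) := fun n =>
    Finset.prod_range_succ _ n
  have key : ∀ n, a n = c n - c (n + 1) := by
    intro n
    have h1 : Q n ≠ 0 := (hQpos n).ne'
    have h2 : (1 - q ^ (l + 1) * q ^ n) ≠ 0 := (hQfac n).ne'
    have h3 : (1 - q ^ l) ≠ 0 := hql.ne'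
    simp only [ha, hc, hPsucc, hQsucc]
    field_simp
    ring
  have hc0 : c 0 = q ^ l / (1 - q ^ l) := by simp [hc, hP, hQ]
  have hanonneg : ∀ n, 0 ≤ a n := by
    intro n
    exact mul_nonneg (div_nonneg (hPpos n).le (hQpos (n + 1)).le)
      (pow_nonneg hq0.le _)
  have hcpos : ∀ n, 0 < c n := by
    intro n
    exact mul_pos (mul_pos (div_pos (hPpos n) (hQpos n)) (pow_pos hq0 _))
      (div_pos (pow_pos hq0 _) hql)
  -- c (n+1) ≤ q^l * c n
  have hratio : ∀ n, c (n + 1) ≤ q ^ l * c n := by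
    intro n
    have h1 : 1 - q ^ (n + 1) ≤ 1 - q ^ (l + 1) * q ^ n := by
      rw [← pow_add]
      have : q ^ (l + 1 + n) ≤ q ^ (n + 1) :=
        pow_le_pow_of_le_one hq0.le hq1.le (by omega)
      linarith
    simp only [hc, hPsucc, hQsucc]
    rw [div_mul_eq_div_div]
    have hPn := hPpos n
    have hQn := hQpos n
    have hf := hQfac n
    have h1q : 0 ≤ 1 - q ^ (n + 1) := by
      have := hqk (n + 1) (by omega); linarith
    have hd : P n * (1 - q ^ (n + 1)) / Q n / (1 - q ^ (l + 1) * q ^ n)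
        ≤ P n / Q n := by
      rw [div_le_iff₀ hf, div_mul_eq_mul_div, div_le_div_iff₀ hQn hQn]
      have h2 := mul_le_mul_of_nonneg_left h1 (mul_pos hPn hQn).le
      nlinarith [h2]
    calc P n * (1 - q ^ (n + 1)) / Q n / (1 - q ^ (l + 1) * q ^ n) * q ^ ((n + 1) * l)
          * (q ^ l / (1 - q ^ l))
        ≤ P n / Q n * q ^ ((n + 1) * l) * (q ^ l / (1 - q ^ l)) := by
          apply mul_le_mul_of_nonneg_right (mul_le_mul_of_nonneg_right hd
            (pow_nonneg hq0.le _)) (div_nonneg (pow_nonneg hq0.le _) hql.le)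
      _ = q ^ l * (P n / Q n * q ^ (n * l) * (q ^ l / (1 - q ^ l))) := by
          rw [add_mul, one_mul, pow_add]; ring
  have hcbound : ∀ n, c n ≤ c 0 * (q ^ l) ^ n := by
    intro n
    induction n with
    | zero => simp
    | succ n ih =>
      calc c (n + 1) ≤ q ^ l * c n := hratio n
        _ ≤ q ^ l * (c 0 * (q ^ l) ^ n) := by
            apply mul_le_mul_of_nonneg_left ih (pow_nonneg hq0.le _)
        _ = c 0 * (q ^ l) ^ (n + 1) := by ring
  have hctend : Tendsto c atTop (nhds 0) := by
    have hgeo : Tendsto (fun n => c 0 * (q ^ l) ^ n) atTop (nhds 0) := by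
      rw [show (0 : ℝ) = c 0 * 0 by ring]
      exact (tendsto_pow_atTop_nhds_zero_of_lt_one (pow_nonneg hq0.le _)
        (pow_lt_one₀ hq0.le hq1 (by omega))).const_mul _
    exact squeeze_zero (fun n => (hcpos n).le) hcbound hgeo
  have hsum : HasSum a (c 0) := by
    rw [hasSum_iff_tendsto_nat_of_nonneg hanonneg]
    have : ∀ n, ∑ i ∈ Finset.range n, a i = c 0 - c n := by
      intro n
      rw [show (∑ i ∈ Finset.range n, a i) = ∑ i ∈ Finset.range n, (c i - c (i + 1))
        from Finset.sum_congr rfl fun i _ => key i]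
      exact Finset.sum_range_sub' c n
    simp only [this]
    have := (tendsto_const_nhds (x := c 0) (f := atTop (α := ℕ))).sub hctend
    simpa using this
  rw [← hc0]
  exact hsum.tsum_eq
end

section
/- For 0 < q < 1, |t| < 1, and all x ∈ ℂ, the Lambert-type series F_q(x,t) = -∑_{k=1}^∞ (x;q)_k·t^k/(1-t^k) has the expansion F_q(x,t) = -∑_{k=1}^∞ t^k/(1-t^k) - ∑_{ℓ=1}^∞ x^ℓ (-1)^ℓ q^{ℓ(ℓ-1)/2}·(∑_{n=1}^∞ t^{nℓ}·(t^n q^{ℓ+1};q)_∞/(t^n;q)_∞). -/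
open Finset

noncomputable def Fq (q : ℝ) (x t : ℂ) : ℂ :=
  -∑' k : ℕ, qPoch q x (k + 1) * t ^ (k + 1) / (1 - t ^ (k + 1))

namespace FqAux

noncomputable def aa (q : ℝ) : ℕ → ℕ → ℝ
  | 0, _ => 1
  | _ + 1, 0 => 0
  | l + 1, k + 1 => aa q (l + 1) k + q ^ k * aa q l k

def ee : ℕ → ℕ
  | 0 => 0
  | l + 1 => ee l + l

lemma two_mul_ee : ∀ l : ℕ, 2 * ee (l + 1) = (l + 1) * l
  | 0 => rfl
  | l + 1 => by
    have h := two_mul_ee l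
    calc 2 * ee (l + 2) = 2 * ee (l + 1) + 2 * (l + 1) := by simp [ee]; ring
      _ = (l + 1) * l + 2 * (l + 1) := by rw [h]
      _ = (l + 2) * (l + 1) := by ring

lemma ee_eq (l : ℕ) : (l + 1) * l / 2 = ee (l + 1) :=
  Nat.div_eq_of_eq_mul_left two_pos (by rw [← two_mul_ee l]; ring)

variable {q : ℝ}

lemma aa_nonneg (hq : 0 ≤ q) : ∀ l k, 0 ≤ aa q l k
  | 0, k => by simp [aa]
  | l + 1, 0 => by simp [aa]
  | l + 1, k + 1 => by
    have h1 := aa_nonneg hq (l + 1) k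
    have h2 := aa_nonneg hq l k
    have h3 : (0:ℝ) ≤ q ^ k := pow_nonneg hq k
    simp only [aa]
    exact add_nonneg h1 (mul_nonneg h3 h2)

lemma aa_zero_of_lt : ∀ l k, k < l → aa q l k = 0
  | l + 1, 0, _ => by simp [aa]
  | l + 1, k + 1, h => by
    have h1 := aa_zero_of_lt (l + 1) k (by omega)
    have h2 := aa_zero_of_lt l k (by omega)
    simp [aa, h1, h2]

lemma aa_succ_sum (l : ℕ) : ∀ K, aa q (l + 1) K = ∑ k ∈ range K, q ^ k * aa q l k
  | 0 => by simp [aa]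
  | K + 1 => by rw [sum_range_succ, ← aa_succ_sum l K]; simp [aa]

lemma aa_le (hq0 : 0 < q) (hq1 : q < 1) : ∀ l k, aa q l k ≤ q ^ ee l * ((1 - q)⁻¹) ^ l
  | 0, k => by simp [aa, ee]
  | l + 1, K => by
    have hB := aa_le hq0 hq1 l
    have hBnn : (0:ℝ) ≤ q ^ ee l * ((1 - q)⁻¹) ^ l := by
      have : (0:ℝ) < 1 - q := by linarith
      positivity
    rw [aa_succ_sum]
    calc ∑ k ∈ range K, q ^ k * aa q l k
        = ∑ k ∈ Ico l K, q ^ k * aa q l k := by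
          rw [range_eq_Ico]
          refine (sum_subset (Ico_subset_Ico (Nat.zero_le l) le_rfl) ?_).symm
          intro x hx hx'
          simp only [mem_Ico] at hx hx'
          have : x < l := by omega
          rw [aa_zero_of_lt l x this, mul_zero]
      _ ≤ ∑ k ∈ Ico l K, q ^ k * (q ^ ee l * ((1 - q)⁻¹) ^ l) := by
          refine sum_le_sum fun k _ => ?_
          exact mul_le_mul_of_nonneg_left (hB k) (pow_nonneg hq0.le k)
      _ = (q ^ ee l * ((1 - q)⁻¹) ^ l) * ∑ k ∈ Ico l K, q ^ k := by
          rw [mul_sum]; exact sum_congr rfl fun k _ => by ring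
      _ ≤ (q ^ ee l * ((1 - q)⁻¹) ^ l) * (q ^ l * (1 - q)⁻¹) := by
          refine mul_le_mul_of_nonneg_left ?_ hBnn
          rw [sum_Ico_eq_sum_range]
          have h1 : ∀ i ∈ range (K - l), q ^ (l + i) = q ^ l * q ^ i := fun i _ => pow_add q l i
          rw [sum_congr rfl h1, ← mul_sum]
          refine mul_le_mul_of_nonneg_left ?_ (pow_nonneg hq0.le l)
          calc ∑ i ∈ range (K - l), q ^ i
              ≤ ∑' i : ℕ, q ^ i := Summable.sum_le_tsum _ (fun i _ => pow_nonneg hq0.le i)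
                (summable_geometric_of_lt_one hq0.le hq1)
            _ = (1 - q)⁻¹ := tsum_geometric_of_lt_one hq0.le hq1
      _ = q ^ ee (l + 1) * ((1 - q)⁻¹) ^ (l + 1) := by
          simp only [ee]
          rw [pow_add, pow_succ]
          ring

lemma qPoch_eq (x : ℂ) : ∀ k, qPoch (q : ℂ) x k
    = ∑ l ∈ range (k + 1), (-x) ^ l * ((aa q l k : ℝ) : ℂ)
  | 0 => by simp [qPoch, aa]
  | k + 1 => by
    have hp : qPoch (q : ℂ) x (k + 1) = qPoch (q : ℂ) x k * (1 - x * (q : ℂ) ^ k) :=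
      prod_range_succ _ _
    rw [hp, qPoch_eq x k]
    -- RHS rearrangement
    rw [sum_range_succ' (fun l => (-x) ^ l * ((aa q l (k + 1) : ℝ) : ℂ)) (k + 1)]
    have haa0 : aa q 0 (k + 1) = 1 := by simp [aa]
    have h1 : ∀ l ∈ range (k + 1), (-x) ^ (l + 1) * ((aa q (l + 1) (k + 1) : ℝ) : ℂ)
        = (-x) ^ (l + 1) * ((aa q (l + 1) k : ℝ) : ℂ)
          + (-((-x) ^ l * ((aa q l k : ℝ) : ℂ))) * (x * (q : ℂ) ^ k) := by
      intro l _
      have : aa q (l + 1) (k + 1) = aa q (l + 1) k + q ^ k * aa q l k := by simp [aa]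
      rw [this]
      push_cast
      ring
    rw [sum_congr rfl h1, sum_add_distrib, ← sum_mul, sum_neg_distrib,
      sum_range_succ (fun l => (-x) ^ (l + 1) * ((aa q (l + 1) k : ℝ) : ℂ)) k,
      aa_zero_of_lt (k + 1) k (by omega),
      sum_range_succ' (fun l => (-x) ^ l * ((aa q l k : ℝ) : ℂ)) k, haa0]
    have haa0' : aa q 0 k = 1 := by cases k <;> simp [aa]
    rw [haa0']
    push_cast
    ring

lemma one_sub_ne_zero {c : ℂ} (h : ‖c‖ < 1) : (1 : ℂ) - c ≠ 0 := by
  intro h0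
  rw [sub_eq_zero] at h0
  rw [← h0] at h
  simp at h

lemma tsum_pow_succ {r : ℂ} (hr : ‖r‖ < 1) : ∑' n : ℕ, r ^ (n + 1) = r / (1 - r) := by
  have h := tsum_geometric_of_norm_lt_one hr
  calc ∑' n : ℕ, r ^ (n + 1) = ∑' n : ℕ, r * r ^ n := by
        refine tsum_congr fun n => ?_; rw [pow_succ, mul_comm]
    _ = r * ∑' n : ℕ, r ^ n := tsum_mul_left
    _ = r / (1 - r) := by rw [h, div_eq_mul_inv]

lemma summable_aa (hq0 : 0 < q) (hq1 : q < 1) (l : ℕ) {u : ℂ} (hu : ‖u‖ < 1) :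
    Summable fun k => ((aa q l k : ℝ) : ℂ) * u ^ k := by
  refine Summable.of_norm_bounded (g := fun k => (q ^ ee l * ((1 - q)⁻¹) ^ l) * ‖u‖ ^ k)
    (((summable_geometric_of_lt_one (norm_nonneg u) hu)).mul_left _) fun k => ?_
  rw [norm_mul, norm_pow, Complex.norm_real, Real.norm_eq_abs,
    abs_of_nonneg (aa_nonneg hq0.le l k)]
  exact mul_le_mul_of_nonneg_right (aa_le hq0 hq1 l k) (pow_nonneg (norm_nonneg u) k)

lemma norm_mul_q_pow (hq0 : 0 < q) (hq1 : q < 1) {u : ℂ} (hu : ‖u‖ < 1) (j : ℕ) :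
    ‖u * (q : ℂ) ^ j‖ < 1 := by
  rw [norm_mul, norm_pow, Complex.norm_real, Real.norm_eq_abs, abs_of_pos hq0]
  calc ‖u‖ * q ^ j ≤ ‖u‖ * 1 :=
        mul_le_mul_of_nonneg_left (pow_le_one₀ hq0.le hq1.le) (norm_nonneg u)
    _ < 1 := by rwa [mul_one]

lemma tsum_aa (hq0 : 0 < q) (hq1 : q < 1) :
    ∀ (l : ℕ) {u : ℂ}, ‖u‖ < 1 →
      ∑' k : ℕ, ((aa q l k : ℝ) : ℂ) * u ^ k
        = (q : ℂ) ^ ee l * u ^ l / ∏ j ∈ range (l + 1), (1 - u * (q : ℂ) ^ j) := by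
  intro l
  induction l with
  | zero =>
    intro u hu
    have : ∀ k : ℕ, ((aa q 0 k : ℝ) : ℂ) * u ^ k = u ^ k := fun k => by simp [aa]
    rw [tsum_congr this, tsum_geometric_of_norm_lt_one hu, prod_range_one]
    norm_num [ee]
  | succ l ih =>
    intro u hu
    have hqu : ‖(q : ℂ) * u‖ < 1 := by
      rw [norm_mul, Complex.norm_real, Real.norm_eq_abs, abs_of_pos hq0]
      nlinarith [norm_nonneg u]
    have hsum1 : Summable fun k => ((aa q (l + 1) k : ℝ) : ℂ) * u ^ k :=
      summable_aa hq0 hq1 (l + 1) hu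
    have hsum2 : Summable fun k => ((aa q l k : ℝ) : ℂ) * ((q : ℂ) * u) ^ k :=
      summable_aa hq0 hq1 l hqu
    have key : (∑' k : ℕ, ((aa q (l + 1) k : ℝ) : ℂ) * u ^ k)
        = u * (∑' k : ℕ, ((aa q (l + 1) k : ℝ) : ℂ) * u ^ k)
          + u * (∑' k : ℕ, ((aa q l k : ℝ) : ℂ) * ((q : ℂ) * u) ^ k) := by
      have h0 : (∑' k : ℕ, ((aa q (l + 1) k : ℝ) : ℂ) * u ^ k)
          = ∑' k : ℕ, ((aa q (l + 1) (k + 1) : ℝ) : ℂ) * u ^ (k + 1) := by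
        rw [Summable.tsum_eq_zero_add hsum1]
        have h00 : aa q (l + 1) 0 = 0 := rfl
        rw [h00]
        push_cast
        rw [zero_mul, zero_add]
      have h1 : ∀ k : ℕ, ((aa q (l + 1) (k + 1) : ℝ) : ℂ) * u ^ (k + 1)
          = u * (((aa q (l + 1) k : ℝ) : ℂ) * u ^ k)
            + u * (((aa q l k : ℝ) : ℂ) * ((q : ℂ) * u) ^ k) := by
        intro k
        have : aa q (l + 1) (k + 1) = aa q (l + 1) k + q ^ k * aa q l k := by simp [aa]
        rw [this, mul_pow]
        push_cast
        ring
      conv_lhs => rw [h0]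
      rw [tsum_congr h1, Summable.tsum_add (hsum1.mul_left u) (hsum2.mul_left u),
        tsum_mul_left, tsum_mul_left]
    have h1u : (1 : ℂ) - u ≠ 0 := one_sub_ne_zero hu
    have hPl : ∀ j ∈ range (l + 1), (1 : ℂ) - ((q : ℂ) * u) * (q : ℂ) ^ j ≠ 0 := by
      intro j _
      exact one_sub_ne_zero (norm_mul_q_pow hq0 hq1 hqu j)
    have hP : (∏ j ∈ range (l + 1), ((1 : ℂ) - ((q : ℂ) * u) * (q : ℂ) ^ j)) ≠ 0 :=
      prod_ne_zero_iff.mpr hPl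
    have hTval := ih hqu
    have hSval : (∑' k : ℕ, ((aa q (l + 1) k : ℝ) : ℂ) * u ^ k)
        = u * (∑' k : ℕ, ((aa q l k : ℝ) : ℂ) * ((q : ℂ) * u) ^ k) / (1 - u) := by
      rw [eq_div_iff h1u]
      linear_combination key
    rw [hSval, hTval]
    have hprod : ∏ j ∈ range (l + 2), ((1 : ℂ) - u * (q : ℂ) ^ j)
        = (∏ j ∈ range (l + 1), ((1 : ℂ) - ((q : ℂ) * u) * (q : ℂ) ^ j)) * (1 - u) := by
      rw [prod_range_succ' (fun j => (1 : ℂ) - u * (q : ℂ) ^ j) (l + 1)]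
      simp only [pow_zero, mul_one]
      congr 1
      exact prod_congr rfl fun j _ => by rw [pow_succ]; ring
    rw [hprod]
    have hee : ee (l + 1) = ee l + l := rfl
    rw [hee, mul_pow, pow_add]
    field_simp
    ring

lemma hQnorm (hq0 : 0 < q) (hq1 : q < 1) : ‖(q : ℂ)‖ < 1 := by
  rw [Complex.norm_real, Real.norm_eq_abs, abs_of_pos hq0]; exact hq1

lemma log_summable (hq0 : 0 < q) (hq1 : q < 1) (c : ℂ) :
    Summable fun j : ℕ => Complex.log (1 - c * (q : ℂ) ^ j) :=
  Summable.clog_one_sub ((summable_geometric_of_norm_lt_one (hQnorm hq0 hq1)).mul_left c)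

lemma tprod_one_sub_eq (hq0 : 0 < q) (hq1 : q < 1) {c : ℂ} (hc : ‖c‖ < 1) :
    ∏' j : ℕ, (1 - c * (q : ℂ) ^ j)
      = Complex.exp (∑' j : ℕ, Complex.log (1 - c * (q : ℂ) ^ j)) := by
  have h := (log_summable hq0 hq1 c).hasSum.cexp
  have hfun : (Complex.exp ∘ fun j : ℕ => Complex.log (1 - c * (q : ℂ) ^ j))
      = fun j : ℕ => 1 - c * (q : ℂ) ^ j :=
    funext fun j => Complex.exp_log (one_sub_ne_zero (norm_mul_q_pow hq0 hq1 hc j))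
  rw [hfun] at h
  exact h.tprod_eq

lemma tprod_ne_zero (hq0 : 0 < q) (hq1 : q < 1) {c : ℂ} (hc : ‖c‖ < 1) :
    ∏' j : ℕ, (1 - c * (q : ℂ) ^ j) ≠ 0 := by
  rw [tprod_one_sub_eq hq0 hq1 hc]
  exact Complex.exp_ne_zero _

lemma tprod_split (hq0 : 0 < q) (hq1 : q < 1) {c : ℂ} (hc : ‖c‖ < 1) (L : ℕ) :
    ∏' j : ℕ, (1 - c * (q : ℂ) ^ j)
      = (∏ j ∈ range L, (1 - c * (q : ℂ) ^ j))
        * ∏' j : ℕ, (1 - c * (q : ℂ) ^ L * (q : ℂ) ^ j) := by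
  have hcL : ‖c * (q : ℂ) ^ L‖ < 1 := norm_mul_q_pow hq0 hq1 hc L
  rw [tprod_one_sub_eq hq0 hq1 hc, tprod_one_sub_eq hq0 hq1 hcL]
  rw [← Summable.sum_add_tsum_nat_add L (log_summable hq0 hq1 c), Complex.exp_add]
  congr 1
  · rw [Complex.exp_sum]
    exact prod_congr rfl fun j _ =>
      Complex.exp_log (one_sub_ne_zero (norm_mul_q_pow hq0 hq1 hc j))
  · congr 1
    exact tsum_congr fun j => by rw [pow_add]; ring_nf

end FqAux

open FqAux

set_option maxHeartbeats 1000000 in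
theorem Fq_expansion_in_powers_of_x (q : ℝ) (hq0 : 0 < q) (hq1 : q < 1)
    (x t : ℂ) (ht : ‖t‖ < 1) :
    Fq q x t = -(∑' k : ℕ, t ^ (k + 1) / (1 - t ^ (k + 1)))
      - ∑' l : ℕ, x ^ (l + 1) * (-1 : ℂ) ^ (l + 1) * (q : ℂ) ^ ((l + 1) * l / 2) *
        ∑' n : ℕ, t ^ ((n + 1) * (l + 1)) *
          (∏' j : ℕ, (1 - t ^ (n + 1) * (q : ℂ) ^ (l + 2) * (q : ℂ) ^ j)) /
          (∏' j : ℕ, (1 - t ^ (n + 1) * (q : ℂ) ^ j)) := by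
  classical
  have htn : ∀ n : ℕ, ‖t ^ (n + 1)‖ < 1 := fun n => by
    rw [norm_pow]; exact pow_lt_one₀ (norm_nonneg t) ht (Nat.succ_ne_zero n)
  have h1q : (0 : ℝ) < 1 - q := by linarith
  set T : ℕ × ℕ × ℕ → ℂ := fun p =>
    (-x) ^ p.1 * ((aa q p.1 (p.2.2 + 1) : ℝ) : ℂ) * t ^ ((p.2.1 + 1) * (p.2.2 + 1)) with hTdef
  -- summability of the triple sum
  set c1 : ℝ := (‖x‖ + 1) * (1 - q)⁻¹ with hc1
  have hc1pos : 0 < c1 := by positivity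
  have hf' : Summable fun l : ℕ => c1 ^ l * q ^ ee l := by
    refine summable_of_ratio_test_tendsto_lt_one (l := 0) one_pos ?_ ?_
    · filter_upwards with n
      positivity
    · have hratio : ∀ n : ℕ, ‖c1 ^ (n + 1) * q ^ ee (n + 1)‖ / ‖c1 ^ n * q ^ ee n‖
          = c1 * q ^ n := by
        intro n
        have hp1 : (0 : ℝ) < c1 ^ n * q ^ ee n := by positivity
        have hp2 : (0 : ℝ) < c1 ^ (n + 1) * q ^ ee (n + 1) := by positivity
        rw [Real.norm_eq_abs, Real.norm_eq_abs, abs_of_pos hp2, abs_of_pos hp1]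
        have hee : ee (n + 1) = ee n + n := rfl
        rw [hee, pow_succ, pow_add]
        field_simp
      have h2 := (tendsto_pow_atTop_nhds_zero_of_lt_one hq0.le hq1).const_mul c1
      rw [mul_zero] at h2
      exact Filter.Tendsto.congr (fun n => (hratio n).symm) h2
  have hgeo : Summable fun n : ℕ => ‖t‖ ^ n := summable_geometric_of_lt_one (norm_nonneg t) ht
  have hg2 : Summable fun p : ℕ × ℕ => ‖t‖ ^ p.1 * ‖t‖ ^ p.2 :=
    hgeo.mul_of_nonneg hgeo (fun n => pow_nonneg (norm_nonneg t) n)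
      (fun n => pow_nonneg (norm_nonneg t) n)
  have hmaj : Summable fun p : ℕ × ℕ × ℕ =>
      (c1 ^ p.1 * q ^ ee p.1) * (‖t‖ ^ p.2.1 * ‖t‖ ^ p.2.2) :=
    hf'.mul_of_nonneg hg2 (fun l => by positivity)
      (fun p => mul_nonneg (pow_nonneg (norm_nonneg t) _) (pow_nonneg (norm_nonneg t) _))
  have hT : Summable T := by
    refine Summable.of_norm_bounded hmaj ?_
    rintro ⟨l, n, k⟩
    have haa : |aa q l (k + 1)| = aa q l (k + 1) := abs_of_nonneg (aa_nonneg hq0.le l (k + 1))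
    have hnorm : ‖T (l, n, k)‖ = ‖x‖ ^ l * aa q l (k + 1) * ‖t‖ ^ ((n + 1) * (k + 1)) := by
      simp only [hTdef, norm_mul, norm_pow, norm_neg, Complex.norm_real, Real.norm_eq_abs, haa]
    rw [hnorm]
    have hstep1 : ‖t‖ ^ ((n + 1) * (k + 1)) ≤ ‖t‖ ^ (n + k) := by
      refine pow_le_pow_of_le_one (norm_nonneg t) ht.le ?_
      nlinarith
    calc ‖x‖ ^ l * aa q l (k + 1) * ‖t‖ ^ ((n + 1) * (k + 1))
        ≤ (‖x‖ + 1) ^ l * (q ^ ee l * ((1 - q)⁻¹) ^ l) * ‖t‖ ^ (n + k) := by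
          have h1 : ‖x‖ ^ l ≤ (‖x‖ + 1) ^ l :=
            pow_le_pow_left₀ (norm_nonneg x) (by linarith) l
          have h2 := aa_le hq0 hq1 l (k + 1)
          have h3 := aa_nonneg hq0.le l (k + 1)
          have hb : (0:ℝ) ≤ q ^ ee l * ((1 - q)⁻¹) ^ l := by positivity
          refine mul_le_mul ?_ hstep1 (pow_nonneg (norm_nonneg t) _) (by positivity)
          exact mul_le_mul h1 h2 h3 (by positivity)
      _ = (c1 ^ l * q ^ ee l) * (‖t‖ ^ n * ‖t‖ ^ k) := by
          rw [hc1, mul_pow, pow_add]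
          ring
  -- the equivalence reordering (k,(l,n)) ↦ (l,(n,k))
  set σ : (ℕ × ℕ × ℕ) ≃ (ℕ × ℕ × ℕ) :=
    ⟨fun w => (w.2.1, w.2.2, w.1), fun p => (p.2.2, p.1, p.2.1), fun w => rfl, fun p => rfl⟩
    with hσ
  have hW : Summable (fun w : ℕ × ℕ × ℕ => T (σ w)) := σ.summable_iff.mpr hT
  have hslice : ∀ k : ℕ, Summable fun p : ℕ × ℕ => T (p.1, p.2, k) := fun k =>
    hW.prod_factor k
  -- Step A
  have stepA : ∀ k : ℕ, qPoch (q : ℂ) x (k + 1) * t ^ (k + 1) / (1 - t ^ (k + 1))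
      = ∑' p : ℕ × ℕ, T (p.1, p.2, k) := by
    intro k
    have hr : ‖t ^ (k + 1)‖ < 1 := htn k
    have hgeo2 : t ^ (k + 1) / (1 - t ^ (k + 1)) = ∑' n : ℕ, t ^ ((n + 1) * (k + 1)) := by
      rw [← tsum_pow_succ hr]
      exact tsum_congr fun n => by rw [← pow_mul, Nat.mul_comm]
    rw [mul_div_assoc, hgeo2, qPoch_eq x (k + 1), sum_mul]
    have h1 : ∀ l ∈ range (k + 2),
        (-x) ^ l * ((aa q l (k + 1) : ℝ) : ℂ) * ∑' n : ℕ, t ^ ((n + 1) * (k + 1))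
          = ∑' n : ℕ, T (l, n, k) := by
      intro l _
      rw [← tsum_mul_left]
    rw [sum_congr rfl h1, Summable.tsum_prod (hslice k)]
    refine (tsum_eq_sum ?_).symm
    intro l hl
    have : aa q l (k + 1) = 0 := by
      refine aa_zero_of_lt l (k + 1) ?_
      simp only [mem_range] at hl
      omega
    have hz : ∀ n : ℕ, T (l, n, k) = 0 := fun n => by
      rw [hTdef]; simp [this]
    rw [tsum_congr hz, tsum_zero]
  -- Step B
  have stepB : (∑' k : ℕ, qPoch (q : ℂ) x (k + 1) * t ^ (k + 1) / (1 - t ^ (k + 1)))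
      = ∑' p : ℕ × ℕ × ℕ, T p := by
    calc ∑' k : ℕ, qPoch (q : ℂ) x (k + 1) * t ^ (k + 1) / (1 - t ^ (k + 1))
        = ∑' k : ℕ, ∑' p : ℕ × ℕ, T (p.1, p.2, k) := tsum_congr stepA
      _ = ∑' w : ℕ × ℕ × ℕ, T (σ w) := (Summable.tsum_prod hW).symm
      _ = ∑' p, T p := σ.tsum_eq T
  -- Step C
  have stepC : (∑' p : ℕ × ℕ × ℕ, T p) = ∑' l : ℕ, ∑' n : ℕ, ∑' k : ℕ, T (l, n, k) := by
    rw [Summable.tsum_prod hT]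
    exact tsum_congr fun l => Summable.tsum_prod (hT.prod_factor l)
  have hgsum : Summable fun l : ℕ => ∑' n : ℕ, ∑' k : ℕ, T (l, n, k) :=
    (hT.prod).congr fun l => Summable.tsum_prod (hT.prod_factor l)
  -- evaluate the inner (k) sum
  have inner : ∀ l n : ℕ, (∑' k : ℕ, T (l, n, k))
      = (-x) ^ l * ((q : ℂ) ^ ee l * (t ^ (n + 1)) ^ l
          / (∏ j ∈ range (l + 1), (1 - t ^ (n + 1) * (q : ℂ) ^ j)) - ((aa q l 0 : ℝ) : ℂ)) := by
    intro l n
    have hu := htn n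
    have h1 : ∀ k : ℕ, T (l, n, k)
        = (-x) ^ l * (((aa q l (k + 1) : ℝ) : ℂ) * (t ^ (n + 1)) ^ (k + 1)) := by
      intro k
      show (-x) ^ l * ((aa q l (k + 1) : ℝ) : ℂ) * t ^ ((n + 1) * (k + 1)) = _
      rw [pow_mul]
      ring
    rw [tsum_congr h1, tsum_mul_left]
    congr 1
    have h2 := Summable.tsum_eq_zero_add (summable_aa hq0 hq1 l hu)
    rw [tsum_aa hq0 hq1 l hu, pow_zero, mul_one] at h2
    linear_combination -h2
  -- the l = 0 term
  have g0 : (∑' n : ℕ, ∑' k : ℕ, T (0, n, k))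
      = ∑' k : ℕ, t ^ (k + 1) / (1 - t ^ (k + 1)) := by
    refine tsum_congr fun n => ?_
    rw [inner 0 n]
    have h1 : (1 : ℂ) - t ^ (n + 1) ≠ 0 := one_sub_ne_zero (htn n)
    have haa : ((aa q 0 0 : ℝ) : ℂ) = 1 := by norm_num [aa]
    have hee : ee 0 = 0 := rfl
    rw [haa, hee, prod_range_one]
    simp only [pow_zero, one_mul, mul_one]
    field_simp
    ring
  -- the l + 1 terms
  have gsucc : ∀ l : ℕ, (∑' n : ℕ, ∑' k : ℕ, T (l + 1, n, k))
      = x ^ (l + 1) * (-1 : ℂ) ^ (l + 1) * (q : ℂ) ^ ((l + 1) * l / 2) *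
        ∑' n : ℕ, t ^ ((n + 1) * (l + 1)) *
          (∏' j : ℕ, (1 - t ^ (n + 1) * (q : ℂ) ^ (l + 2) * (q : ℂ) ^ j)) /
          (∏' j : ℕ, (1 - t ^ (n + 1) * (q : ℂ) ^ j)) := by
    intro l
    have h1 : ∀ n : ℕ, (∑' k : ℕ, T (l + 1, n, k))
        = ((-x) ^ (l + 1) * (q : ℂ) ^ ee (l + 1)) *
          ((t ^ (n + 1)) ^ (l + 1) / ∏ j ∈ range (l + 2), (1 - t ^ (n + 1) * (q : ℂ) ^ j)) := by
      intro n
      rw [inner (l + 1) n]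
      have h0 : ((aa q (l + 1) 0 : ℝ) : ℂ) = 0 := by norm_num [aa]
      rw [h0, sub_zero]
      ring
    have h2 : ∀ n : ℕ, t ^ ((n + 1) * (l + 1)) *
          (∏' j : ℕ, (1 - t ^ (n + 1) * (q : ℂ) ^ (l + 2) * (q : ℂ) ^ j)) /
          (∏' j : ℕ, (1 - t ^ (n + 1) * (q : ℂ) ^ j))
        = (t ^ (n + 1)) ^ (l + 1) / ∏ j ∈ range (l + 2), (1 - t ^ (n + 1) * (q : ℂ) ^ j) := by
      intro n
      have hu := htn n
      have hA : (∏' j : ℕ, (1 - t ^ (n + 1) * (q : ℂ) ^ (l + 2) * (q : ℂ) ^ j)) ≠ 0 :=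
        tprod_ne_zero hq0 hq1 (norm_mul_q_pow hq0 hq1 hu (l + 2))
      rw [tprod_split hq0 hq1 hu (l + 2), pow_mul]
      exact mul_div_mul_right _ _ hA
    rw [tsum_congr h1, tsum_mul_left, tsum_congr fun n => (h2 n).symm]
    rw [ee_eq l, neg_pow]
    ring
  -- assembly
  show -(∑' k : ℕ, qPoch (q : ℂ) x (k + 1) * t ^ (k + 1) / (1 - t ^ (k + 1))) = _
  rw [stepB, stepC, Summable.tsum_eq_zero_add hgsum, g0, tsum_congr gsucc]
  ring
end

section
/- The q-dilogarithm Li_2(x;q) = ∑_{k=1}^∞ (q^k/(1-q^k)^2)·(x;q)_k satisfies the q-difference relation Li_2(qx;q) - Li_2(x;q) = -(x/(1-x))·S_q(x) for x ≠ 1, where 0 < q < 1. -/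
noncomputable def qDilog (q : ℝ) (x : ℂ) : ℂ :=
  ∑' k : ℕ, ((q : ℂ) ^ (k + 1) / (1 - (q : ℂ) ^ (k + 1)) ^ 2) * qPoch q x (k + 1)

set_option maxHeartbeats 1000000 in
lemma qPoch_norm_le (q : ℝ) (hq0 : 0 < q) (hq1 : q < 1) (x : ℂ) (n : ℕ) :
    ‖qPoch q x n‖ ≤ Real.exp (‖x‖ / (1 - q)) := by
  have hsum : Summable (fun j : ℕ => q ^ j) := summable_geometric_of_lt_one hq0.le hq1
  calc ‖qPoch q x n‖ ≤ ∏ j ∈ Finset.range n, ‖(1 : ℂ) - x * (q : ℂ) ^ j‖ := le_of_eq (norm_prod _ _)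
    _ ≤ ∏ j ∈ Finset.range n, Real.exp (‖x‖ * q ^ j) := by
        apply Finset.prod_le_prod (fun j _ => norm_nonneg _)
        intro j _
        calc ‖(1 : ℂ) - x * (q : ℂ) ^ j‖ ≤ ‖(1 : ℂ)‖ + ‖x * (q : ℂ) ^ j‖ := norm_sub_le _ _
          _ = 1 + ‖x‖ * q ^ j := by
              rw [norm_one, norm_mul, norm_pow, Complex.norm_real,
                Real.norm_of_nonneg hq0.le]
          _ ≤ Real.exp (‖x‖ * q ^ j) := by
              have := Real.add_one_le_exp (‖x‖ * q ^ j); linarith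
    _ = Real.exp (∑ j ∈ Finset.range n, ‖x‖ * q ^ j) := (Real.exp_sum _ _).symm
    _ ≤ Real.exp (‖x‖ / (1 - q)) := by
        apply Real.exp_le_exp.mpr
        rw [← Finset.mul_sum, div_eq_mul_inv]
        apply mul_le_mul_of_nonneg_left _ (norm_nonneg x)
        calc ∑ j ∈ Finset.range n, q ^ j ≤ ∑' j : ℕ, q ^ j :=
              Summable.sum_le_tsum _ (fun j _ => by positivity) hsum
          _ = (1 - q)⁻¹ := tsum_geometric_of_lt_one hq0.le hq1

lemma one_sub_q_pow_pos (q : ℝ) (hq0 : 0 < q) (hq1 : q < 1) (k : ℕ) :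
    0 < 1 - q ^ (k + 1) := by
  have : q ^ (k + 1) < 1 := pow_lt_one₀ hq0.le hq1 (Nat.succ_ne_zero k)
  linarith

lemma summable_aux (q : ℝ) (hq0 : 0 < q) (hq1 : q < 1) (x : ℂ) :
    Summable (fun k : ℕ =>
      ((q : ℂ) ^ (k + 1) / (1 - (q : ℂ) ^ (k + 1)) ^ 2) * qPoch q x (k + 1)) := by
  set C := Real.exp (‖x‖ / (1 - q))
  have hC : 0 ≤ C := Real.exp_nonneg _
  apply Summable.of_norm_bounded (g := fun k : ℕ => (q ^ (k + 1) / (1 - q) ^ 2) * C)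
  · have h1 : Summable (fun k : ℕ => q ^ (k + 1)) :=
      (summable_geometric_of_lt_one hq0.le hq1).comp_injective (add_left_injective 1)
    simpa [div_eq_mul_inv, mul_assoc, mul_comm, mul_left_comm] using
      (h1.mul_right (((1 - q) ^ 2)⁻¹ * C))
  · intro k
    rw [norm_mul]
    have hcast : ((q : ℂ) ^ (k + 1) / (1 - (q : ℂ) ^ (k + 1)) ^ 2)
        = ((q ^ (k + 1) / (1 - q ^ (k + 1)) ^ 2 : ℝ) : ℂ) := by push_cast; ring
    have hpos := one_sub_q_pow_pos q hq0 hq1 k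
    have hnorm1 : ‖((q : ℂ) ^ (k + 1) / (1 - (q : ℂ) ^ (k + 1)) ^ 2)‖
        = q ^ (k + 1) / (1 - q ^ (k + 1)) ^ 2 := by
      rw [hcast, Complex.norm_real, Real.norm_of_nonneg (by positivity)]
    rw [hnorm1]
    have h2 : q ^ (k + 1) / (1 - q ^ (k + 1)) ^ 2 ≤ q ^ (k + 1) / (1 - q) ^ 2 := by
      have hq : q ^ (k + 1) ≤ q := by
        calc q ^ (k + 1) ≤ q ^ 1 := pow_le_pow_of_le_one hq0.le hq1.le (by omega)
          _ = q := pow_one q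
      have hpos := one_sub_q_pow_pos q hq0 hq1 k
      gcongr
    exact mul_le_mul h2 (qPoch_norm_le q hq0 hq1 x _) (norm_nonneg _) (by positivity)

lemma qPoch_mul_q (q x : ℂ) (n : ℕ) :
    (1 - x) * qPoch q (q * x) n = qPoch q x (n + 1) := by
  rw [qPoch, qPoch, Finset.prod_range_succ']
  simp only [pow_zero, mul_one]
  rw [mul_comm]
  congr 1
  apply Finset.prod_congr rfl
  intro j _
  ring

theorem qdilog_qdifference (q : ℝ) (hq0 : 0 < q) (hq1 : q < 1) (x : ℂ) (hx : x ≠ 1) :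
    qDilog q ((q : ℂ) * x) - qDilog q x = -(x / (1 - x)) * Sq q x := by
  have hxne : (1 : ℂ) - x ≠ 0 := sub_ne_zero.mpr (Ne.symm hx)
  have hg := summable_aux q hq0 hq1 ((q : ℂ) * x)
  have hf := summable_aux q hq0 hq1 x
  rw [qDilog, qDilog, ← hg.tsum_sub hf]
  have : -(x / (1 - x)) * Sq q x
      = ∑' k : ℕ, (x / (1 - x)) *
          (((q : ℂ) ^ (k + 1) / (1 - (q : ℂ) ^ (k + 1))) * qPoch q x (k + 1)) := by
    rw [Sq, neg_mul, mul_neg, neg_neg, tsum_mul_left]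
  rw [this]
  apply tsum_congr
  intro k
  have hqne : (1 : ℂ) - (q : ℂ) ^ (k + 1) ≠ 0 := by
    have hpos := one_sub_q_pow_pos q hq0 hq1 k
    have : ((1 - q ^ (k + 1) : ℝ) : ℂ) ≠ 0 := Complex.ofReal_ne_zero.mpr (ne_of_gt hpos)
    simpa using this
  have hpoch : qPoch q ((q : ℂ) * x) (k + 1)
      = qPoch q x (k + 1) * (1 - x * (q : ℂ) ^ (k + 1)) / (1 - x) := by
    have h1 := qPoch_mul_q (q : ℂ) x (k + 1)
    have h2 : qPoch q x (k + 1 + 1) = qPoch q x (k + 1) * (1 - x * (q : ℂ) ^ (k + 1)) :=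
      Finset.prod_range_succ _ _
    field_simp
    rw [mul_comm] at h1
    rw [h1, h2]
  rw [hpoch]
  field_simp
  ring
end

section
/- For every positive integer n: Li_2(q^{-n};q) = -∑_{k=1}^n k/(1-q^k), and also Li_2(1;q) = 0 and Li_2(0;q) = ∑_{k=1}^∞ q^k/(1-q^k)^2 = ∑_{n=1}^∞ n q^n/(1-q^n), where 0 < q < 1. -/
lemma qPoch_succ' (c x : ℂ) (k : ℕ) : qPoch c x (k+1) = qPoch c x k * (1 - x * c^k) :=
  Finset.prod_range_succ _ _

lemma qPoch_shift (c x : ℂ) (k : ℕ) : (1 - x) * qPoch c (c*x) k = qPoch c x (k+1) := by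
  induction k with
  | zero => simp [qPoch]
  | succ k ih =>
      rw [qPoch_succ', qPoch_succ' c x, ← ih]
      ring

lemma qPoch_telescope (c x : ℂ) (N : ℕ) :
    ∑ k ∈ Finset.range N, x * c^k * qPoch c x k = 1 - qPoch c x N := by
  induction N with
  | zero => simp [qPoch]
  | succ N ih => rw [Finset.sum_range_succ, ih, qPoch_succ']; ring

lemma qPoch_eq_zero (c : ℂ) (hc : c ≠ 0) (n k : ℕ) (hk : n < k) : qPoch c (c^n)⁻¹ k = 0 := by
  apply Finset.prod_eq_zero (Finset.mem_range.2 hk)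
  field_simp
  simp

lemma qaux_term1 (x z A B : ℂ) (hrel : (1-x)*B = A*(1-x*z)) (h1x : 1-x ≠ 0) (hm1 : 1-z ≠ 0) :
    z/(1-z)*A - z/(1-z)*B = (-x/(1-x))*(z*A) := by
  have hB : B = A*(1-x*z)/(1-x) := by
    rw [eq_div_iff h1x]
    linear_combination hrel
  rw [hB]
  field_simp
  ring

lemma qaux_term2 (x z A B : ℂ) (hrel : (1-x)*B = A*(1-x*z)) (h1x : 1-x ≠ 0) (hm1 : 1-z ≠ 0) :
    z/(1-z)^2*A - z/(1-z)^2*B = (-x/(1-x))*((z/(1-z))*A) := by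
  have hB : B = A*(1-x*z)/(1-x) := by
    rw [eq_div_iff h1x]
    linear_combination hrel
  rw [hB]
  field_simp
  ring

lemma qaux_fin1 (z : ℂ) (hz : z ≠ 0) (hz1 : z ≠ 1) : (-z⁻¹/(1-z⁻¹))*(z-1) = -1 := by
  have h2 : z - 1 ≠ 0 := sub_ne_zero.2 hz1
  have h1 : 1 - z⁻¹ ≠ 0 := by
    intro h
    apply hz1
    have hh : z⁻¹ = 1 := by linear_combination -h
    rw [← inv_inv z, hh, inv_one]
  field_simp

lemma qaux_fin2 (z w : ℂ) (hz : z ≠ 0) (hz1 : z ≠ 1) :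
    (-z⁻¹/(1-z⁻¹)) * (-w) = -(w / (1 - z)) := by
  have h2 : (1:ℂ) - z ≠ 0 := sub_ne_zero.2 (Ne.symm hz1)
  have h1 : 1 - z⁻¹ ≠ 0 := by
    intro h
    apply hz1
    have hh : z⁻¹ = 1 := by linear_combination -h
    rw [← inv_inv z, hh, inv_one]
  rw [neg_div, neg_mul_neg, div_mul_eq_mul_div, ← neg_div, div_eq_div_iff h1 h2]
  field_simp
  ring

section main
variable {q : ℝ}

lemma qaux_pow_ne_one (hq0 : 0 < q) (hq1 : q < 1) (m : ℕ) (hm : 1 ≤ m) : ((q:ℂ))^m ≠ 1 := by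
  intro h
  have h1 : ‖((q:ℂ))^m‖ = 1 := by rw [h, norm_one]
  rw [norm_pow, Complex.norm_real, Real.norm_eq_abs, abs_of_pos hq0] at h1
  have : q ^ m < 1 := pow_lt_one₀ hq0.le hq1 (by omega)
  linarith

lemma qaux_sub_ne (hq0 : 0 < q) (hq1 : q < 1) (m : ℕ) (hm : 1 ≤ m) : (1:ℂ) - (q:ℂ)^m ≠ 0 :=
  sub_ne_zero.2 (Ne.symm (qaux_pow_ne_one hq0 hq1 m hm))

lemma qaux_sub_inv_ne (hq0 : 0 < q) (hq1 : q < 1) (m : ℕ) (hm : 1 ≤ m) :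
    (1:ℂ) - ((q:ℂ)^m)⁻¹ ≠ 0 := by
  intro h
  apply qaux_pow_ne_one hq0 hq1 m hm
  have h2 : ((q:ℂ)^m)⁻¹ = 1 := by linear_combination -h
  rw [← inv_inv ((q:ℂ)^m), h2, inv_one]

lemma qaux_L0 (hq0 : 0 < q) (N : ℕ) :
    ∑ m ∈ Finset.range N, (q:ℂ)^(m+1) * qPoch q (((q:ℂ)^N)⁻¹) (m+1) = (q:ℂ)^N - 1 := by
  have hc0 : (q:ℂ) ≠ 0 := Complex.ofReal_ne_zero.2 hq0.ne'
  have hcN : (q:ℂ)^N ≠ 0 := pow_ne_zero _ hc0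
  have hx0 : ((q:ℂ)^N)⁻¹ ≠ 0 := inv_ne_zero hcN
  have htel := qPoch_telescope (q:ℂ) (((q:ℂ)^N)⁻¹) (N+1)
  rw [qPoch_eq_zero (q:ℂ) hc0 N (N+1) (by omega), sub_zero, Finset.sum_range_succ'] at htel
  have h00 : ((q:ℂ)^N)⁻¹ * (q:ℂ)^0 * qPoch q (((q:ℂ)^N)⁻¹) 0 = ((q:ℂ)^N)⁻¹ := by
    simp [qPoch]
  rw [h00] at htel
  have key : ∑ m ∈ Finset.range N, (q:ℂ)^(m+1) * qPoch q (((q:ℂ)^N)⁻¹) (m+1)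
      = (q:ℂ)^N * ∑ m ∈ Finset.range N,
          ((q:ℂ)^N)⁻¹ * (q:ℂ)^(m+1) * qPoch q (((q:ℂ)^N)⁻¹) (m+1) := by
    rw [Finset.mul_sum]
    refine Finset.sum_congr rfl fun m _ => ?_
    field_simp
  have hS : ∑ m ∈ Finset.range N, ((q:ℂ)^N)⁻¹ * (q:ℂ)^(m+1) * qPoch q (((q:ℂ)^N)⁻¹) (m+1)
      = 1 - ((q:ℂ)^N)⁻¹ := by linear_combination htel
  rw [key, hS]
  field_simp

lemma qaux_L1 (hq0 : 0 < q) (hq1 : q < 1) (n : ℕ) :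
    ∑ m ∈ Finset.range n, ((q:ℂ)^(m+1) / (1 - (q:ℂ)^(m+1))) * qPoch q (((q:ℂ)^n)⁻¹) (m+1)
      = -(n : ℂ) := by
  have hc0 : (q:ℂ) ≠ 0 := Complex.ofReal_ne_zero.2 hq0.ne'
  induction n with
  | zero => simp
  | succ n ih =>
      have h1x : (1:ℂ) - ((q:ℂ)^(n+1))⁻¹ ≠ 0 := qaux_sub_inv_ne hq0 hq1 (n+1) (by omega)
      have hxy : (q:ℂ) * ((q:ℂ)^(n+1))⁻¹ = ((q:ℂ)^n)⁻¹ := by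
        rw [pow_succ]
        field_simp
      have hSy : ∑ m ∈ Finset.range (n+1),
          ((q:ℂ)^(m+1) / (1 - (q:ℂ)^(m+1))) * qPoch q (((q:ℂ)^n)⁻¹) (m+1) = -(n : ℂ) := by
        rw [Finset.sum_range_succ, ih, qPoch_eq_zero (q:ℂ) hc0 n (n+1) (by omega)]
        ring
      have hdiff : ∑ m ∈ Finset.range (n+1),
          (((q:ℂ)^(m+1) / (1 - (q:ℂ)^(m+1))) * qPoch q (((q:ℂ)^(n+1))⁻¹) (m+1)
            - ((q:ℂ)^(m+1) / (1 - (q:ℂ)^(m+1))) * qPoch q (((q:ℂ)^n)⁻¹) (m+1))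
          = (-((q:ℂ)^(n+1))⁻¹ / (1 - ((q:ℂ)^(n+1))⁻¹)) *
              ∑ m ∈ Finset.range (n+1), (q:ℂ)^(m+1) * qPoch q (((q:ℂ)^(n+1))⁻¹) (m+1) := by
        rw [Finset.mul_sum]
        refine Finset.sum_congr rfl fun m _ => ?_
        have hrel : (1 - ((q:ℂ)^(n+1))⁻¹) * qPoch q (((q:ℂ)^n)⁻¹) (m+1)
            = qPoch q (((q:ℂ)^(n+1))⁻¹) (m+1) * (1 - ((q:ℂ)^(n+1))⁻¹ * (q:ℂ)^(m+1)) := by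
          rw [← hxy, qPoch_shift]
          exact qPoch_succ' _ _ _
        have hm1 : (1:ℂ) - (q:ℂ)^(m+1) ≠ 0 := qaux_sub_ne hq0 hq1 (m+1) (by omega)
        exact qaux_term1 _ _ _ _ hrel h1x hm1
      rw [Finset.sum_sub_distrib, hSy, qaux_L0 hq0 (n+1)] at hdiff
      have hz0 : (q:ℂ)^(n+1) ≠ 0 := pow_ne_zero _ hc0
      have hfin := qaux_fin1 ((q:ℂ)^(n+1)) hz0 (qaux_pow_ne_one hq0 hq1 (n+1) (by omega))
      rw [hfin] at hdiff
      push_cast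
      linear_combination hdiff

lemma qaux_L2 (hq0 : 0 < q) (hq1 : q < 1) (n : ℕ) :
    ∑ m ∈ Finset.range n, ((q:ℂ)^(m+1) / (1 - (q:ℂ)^(m+1))^2) * qPoch q (((q:ℂ)^n)⁻¹) (m+1)
      = -∑ k ∈ Finset.Icc 1 n, (k : ℂ) / (1 - (q:ℂ)^k) := by
  have hc0 : (q:ℂ) ≠ 0 := Complex.ofReal_ne_zero.2 hq0.ne'
  induction n with
  | zero => simp
  | succ n ih =>
      have h1x : (1:ℂ) - ((q:ℂ)^(n+1))⁻¹ ≠ 0 := qaux_sub_inv_ne hq0 hq1 (n+1) (by omega)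
      have hxy : (q:ℂ) * ((q:ℂ)^(n+1))⁻¹ = ((q:ℂ)^n)⁻¹ := by
        rw [pow_succ]
        field_simp
      have hSy : ∑ m ∈ Finset.range (n+1),
          ((q:ℂ)^(m+1) / (1 - (q:ℂ)^(m+1))^2) * qPoch q (((q:ℂ)^n)⁻¹) (m+1)
          = -∑ k ∈ Finset.Icc 1 n, (k : ℂ) / (1 - (q:ℂ)^k) := by
        rw [Finset.sum_range_succ, ih, qPoch_eq_zero (q:ℂ) hc0 n (n+1) (by omega)]
        ring
      have hdiff : ∑ m ∈ Finset.range (n+1),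
          (((q:ℂ)^(m+1) / (1 - (q:ℂ)^(m+1))^2) * qPoch q (((q:ℂ)^(n+1))⁻¹) (m+1)
            - ((q:ℂ)^(m+1) / (1 - (q:ℂ)^(m+1))^2) * qPoch q (((q:ℂ)^n)⁻¹) (m+1))
          = (-((q:ℂ)^(n+1))⁻¹ / (1 - ((q:ℂ)^(n+1))⁻¹)) *
              ∑ m ∈ Finset.range (n+1),
                ((q:ℂ)^(m+1) / (1 - (q:ℂ)^(m+1))) * qPoch q (((q:ℂ)^(n+1))⁻¹) (m+1) := by
        rw [Finset.mul_sum]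
        refine Finset.sum_congr rfl fun m _ => ?_
        have hrel : (1 - ((q:ℂ)^(n+1))⁻¹) * qPoch q (((q:ℂ)^n)⁻¹) (m+1)
            = qPoch q (((q:ℂ)^(n+1))⁻¹) (m+1) * (1 - ((q:ℂ)^(n+1))⁻¹ * (q:ℂ)^(m+1)) := by
          rw [← hxy, qPoch_shift]
          exact qPoch_succ' _ _ _
        have hm1 : (1:ℂ) - (q:ℂ)^(m+1) ≠ 0 := qaux_sub_ne hq0 hq1 (m+1) (by omega)
        exact qaux_term2 _ _ _ _ hrel h1x hm1
      rw [Finset.sum_sub_distrib, hSy, qaux_L1 hq0 hq1 (n+1)] at hdiff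
      have hz0 : (q:ℂ)^(n+1) ≠ 0 := pow_ne_zero _ hc0
      have hz1 : (1:ℂ) - (q:ℂ)^(n+1) ≠ 0 := qaux_sub_ne hq0 hq1 (n+1) (by omega)
      have hfin := qaux_fin2 ((q:ℂ)^(n+1)) ((n:ℕ)+1 : ℂ) hz0
        (qaux_pow_ne_one hq0 hq1 (n+1) (by omega))
      have hcast : -((n+1 : ℕ) : ℂ) = -((n:ℕ)+1 : ℂ) := by push_cast; ring
      rw [hcast, hfin] at hdiff
      have hIcc : ∑ k ∈ Finset.Icc 1 (n+1), (k : ℂ) / (1 - (q:ℂ)^k)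
          = (∑ k ∈ Finset.Icc 1 n, (k : ℂ) / (1 - (q:ℂ)^k))
            + ((n:ℕ)+1 : ℂ) / (1 - (q:ℂ)^(n+1)) := by
        rw [Finset.sum_Icc_succ_top (by omega : 1 ≤ n+1)]
        push_cast
        ring
      rw [hIcc]
      linear_combination hdiff
end main


theorem qdilog_special_values (q : ℝ) (hq0 : 0 < q) (hq1 : q < 1) :
    qDilog q 1 = 0 ∧
    qDilog q 0 = ∑' k : ℕ, (q : ℂ) ^ (k + 1) / (1 - (q : ℂ) ^ (k + 1)) ^ 2 ∧
    (∑' k : ℕ, (q : ℂ) ^ (k + 1) / (1 - (q : ℂ) ^ (k + 1)) ^ 2) =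
      ∑' n : ℕ, ((n : ℂ) + 1) * (q : ℂ) ^ (n + 1) / (1 - (q : ℂ) ^ (n + 1)) ∧
    ∀ n : ℕ, 1 ≤ n →
      qDilog q ((q : ℂ) ^ (-(n : ℤ))) = -∑ k ∈ Finset.Icc 1 n, (k : ℂ) / (1 - (q : ℂ) ^ k) := by
  refine ⟨?_, ?_, ?_, ?_⟩
  · have h : ∀ k : ℕ, qPoch q 1 (k+1) = 0 := by
      intro k
      refine Finset.prod_eq_zero (Finset.mem_range.2 (Nat.succ_pos k)) ?_
      simp
    simp [qDilog, h]
  · have h : ∀ k : ℕ, qPoch q 0 (k+1) = 1 := by intro k; simp [qPoch]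
    simp [qDilog, h]
  · set c : ℂ := (q : ℂ) with hc
    have hnorm : ‖c‖ = q := by rw [hc, Complex.norm_real, Real.norm_eq_abs, abs_of_pos hq0]
    have hnlt : ∀ m : ℕ, 1 ≤ m → ‖c ^ m‖ < 1 := by
      intro m hm
      rw [norm_pow, hnorm]
      exact pow_lt_one₀ hq0.le hq1 (by omega)
    -- the double-indexed family
    set F : ℕ → ℕ → ℂ := fun a b => ((b : ℂ) + 1) * c ^ ((a+1)*(b+1)) with hF
    -- summability
    have hsum : Summable (Function.uncurry F) := by
      have hg : Summable (fun a : ℕ => q ^ a) := summable_geometric_of_lt_one hq0.le hq1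
      have hh0 : Summable (fun n : ℕ => (n : ℝ) * q ^ n) := by
        simpa using summable_pow_mul_geometric_of_norm_lt_one 1
          (r := q) (by rwa [Real.norm_eq_abs, abs_of_pos hq0])
      have hh : Summable (fun b : ℕ => ((b : ℝ) + 1) * q ^ (b+1)) := by
        have := (summable_nat_add_iff 1).2 hh0
        simpa using this
      have hprod : Summable (fun p : ℕ × ℕ => q ^ p.1 * (((p.2 : ℝ) + 1) * q ^ (p.2+1))) := by
        apply Summable.mul_of_nonneg hg hh
        · intro x
          simp only [Pi.zero_apply]
          exact pow_nonneg hq0.le x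
        · intro x
          simp only [Pi.zero_apply]
          exact mul_nonneg (by positivity) (pow_nonneg hq0.le _)
      apply Summable.of_norm
      apply hprod.of_nonneg_of_le (fun p => norm_nonneg _)
      intro p
      have : ‖Function.uncurry F p‖ = ((p.2 : ℝ) + 1) * q ^ ((p.1+1)*(p.2+1)) := by
        rw [Function.uncurry, hF]
        rw [norm_mul, norm_pow, hnorm]
        congr 1
        rw [show ((p.2 : ℂ) + 1) = ((p.2 + 1 : ℕ) : ℂ) by push_cast; ring]
        rw [Complex.norm_natCast]
        push_cast; ring
      rw [this]
      have hexp : q ^ ((p.1+1)*(p.2+1)) ≤ q ^ p.1 * q ^ (p.2+1) := by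
        rw [← pow_add]
        apply pow_le_pow_of_le_one hq0.le hq1.le
        nlinarith [Nat.zero_le (p.1 * p.2)]
      calc ((p.2 : ℝ) + 1) * q ^ ((p.1+1)*(p.2+1))
          ≤ ((p.2 : ℝ) + 1) * (q ^ p.1 * q ^ (p.2+1)) := by
            apply mul_le_mul_of_nonneg_left hexp (by positivity)
        _ = q ^ p.1 * (((p.2 : ℝ) + 1) * q ^ (p.2+1)) := by ring
    -- left side terms
    have hL : ∀ k : ℕ, c ^ (k + 1) / (1 - c ^ (k + 1)) ^ 2 = ∑' b, F k b := by
      intro k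
      have hr := hnlt (k+1) (by omega)
      have hgeo : HasSum (fun n : ℕ => (n : ℂ) * (c ^ (k+1)) ^ n) (c^(k+1) / (1 - c^(k+1)) ^ 2) :=
        hasSum_coe_mul_geometric_of_norm_lt_one hr
      have h0 : ∑' n : ℕ, (n : ℂ) * (c ^ (k+1)) ^ n
          = ∑' b : ℕ, ((b : ℂ) + 1) * (c ^ (k+1)) ^ (b+1) := by
        rw [hgeo.summable.tsum_eq_zero_add]
        push_cast
        simp
      rw [← hgeo.tsum_eq, h0]
      apply tsum_congr
      intro b
      rw [hF]
      rw [← pow_mul]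
    -- right side terms
    have hR : ∀ n : ℕ, ((n : ℂ) + 1) * c ^ (n + 1) / (1 - c ^ (n + 1)) = ∑' a, F a n := by
      intro n
      have hr := hnlt (n+1) (by omega)
      have hgeo : ∑' a : ℕ, (c ^ (n+1)) ^ a = (1 - c^(n+1))⁻¹ := tsum_geometric_of_norm_lt_one hr
      have : ∑' a : ℕ, F a n = ((n:ℂ)+1) * c^(n+1) * ∑' a : ℕ, (c ^ (n+1)) ^ a := by
        rw [← tsum_mul_left]
        apply tsum_congr
        intro a
        rw [hF, ← pow_mul]
        ring_nf
      rw [this, hgeo]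
      rw [div_eq_mul_inv]
    calc (∑' k : ℕ, c ^ (k + 1) / (1 - c ^ (k + 1)) ^ 2) = ∑' (k) (b), F k b := by
          exact tsum_congr hL
      _ = ∑' (b) (k), F k b := by
          refine (hsum.tsum_comm' ?_ ?_).symm
          · intro k; simpa using hsum.prod_factor k
          · intro b; simpa using hsum.prod_symm.prod_factor b
      _ = ∑' n : ℕ, ((n : ℂ) + 1) * c ^ (n + 1) / (1 - c ^ (n + 1)) := by
          exact (tsum_congr hR).symm
  · intro n hn
    have hc0 : (q:ℂ) ≠ 0 := Complex.ofReal_ne_zero.2 hq0.ne'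
    have hz : (q:ℂ) ^ (-(n:ℤ)) = (((q:ℂ))^n)⁻¹ := by
      rw [zpow_neg, zpow_natCast]
    rw [hz]
    have hfin : qDilog q ((((q:ℂ))^n)⁻¹)
        = ∑ k ∈ Finset.range n,
            ((q:ℂ)^(k+1) / (1 - (q:ℂ)^(k+1))^2) * qPoch q (((q:ℂ)^n)⁻¹) (k+1) := by
      apply tsum_eq_sum
      intro k hk
      have hkn : n < k + 1 := by
        by_contra hcon
        exact hk (Finset.mem_range.2 (by omega))
      rw [qPoch_eq_zero (q:ℂ) hc0 n (k+1) hkn, mul_zero]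
    rw [hfin]
    exact qaux_L2 hq0 hq1 n
end
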